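/- arXiv:2603.01483 — 10 statements merged into one kernel-verified Lean document; each statement's English description precedes it below -/
import Mathlib

section
/- Let B = [[x, b₁₂],[b₂₁, a]] ∈ M₂(ℂ) and let s, p ∈ ℂ satisfy b₁₂ + b₂₁ = s and b₁₂b₂₁ = ax − p. Then det(I − B*B) = 1 − |a|² − |x|² + |p|² − |s|²/2 − |s² − 4(ax−p)|/2. Moreover: (1) if |p| < 1, then ‖B‖ < 1 if and only if det(I − B*B) > 0; (2) if |p| ≤ 1, then ‖B‖ ≤ 1 if and only if det(I − B*B) ≥ 0. -/
/-- The operator norm of a 2×2 complex matrix, acting on the Euclidean space ℂ². -/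
noncomputable def opNorm (A : Matrix (Fin 2) (Fin 2) ℂ) : ℝ :=
  ‖LinearMap.toContinuousLinearMap (Matrix.toEuclideanLin A)‖

open scoped ENNReal


private lemma spec_two (M : Matrix (Fin 2) (Fin 2) ℂ) (z : ℂ) :
    z ∈ spectrum ℂ M ↔ (z - M 0 0) * (z - M 1 1) - M 0 1 * M 1 0 = 0 := by
  rw [spectrum.mem_iff, Matrix.isUnit_iff_isUnit_det, isUnit_iff_ne_zero, not_ne_iff]
  have : (algebraMap ℂ (Matrix (Fin 2) (Fin 2) ℂ) z - M).det
      = (z - M 0 0) * (z - M 1 1) - M 0 1 * M 1 0 := by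
    simp [Matrix.det_fin_two, Matrix.algebraMap_matrix_apply]
  rw [this]

private lemma norm_eq_of_spectrum (S : EuclideanSpace ℂ (Fin 2) →L[ℂ] EuclideanSpace ℂ (Fin 2))
    (hS : IsSelfAdjoint S) (l1 l2 : ℝ) (h1 : 0 ≤ l1) (h12 : l1 ≤ l2)
    (hspec : spectrum ℂ S = {(l1 : ℂ), (l2 : ℂ)}) : ‖S‖ = l2 := by
  have h2 : (0:ℝ) ≤ l2 := h1.trans h12
  have hub : spectralRadius ℂ S ≤ ENNReal.ofReal l2 := by
    rw [spectralRadius]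
    refine iSup₂_le fun z hz => ?_
    rw [hspec] at hz
    rw [show ((‖z‖₊ : ℝ≥0∞)) = ENNReal.ofReal ‖z‖ from (ofReal_norm z).symm]
    refine ENNReal.ofReal_le_ofReal ?_
    rcases hz with hz | hz <;> subst hz <;>
      simp only [Complex.norm_real, Real.norm_eq_abs] <;> rw [abs_of_nonneg (by linarith)] <;>
      linarith
  have hlb : l2 ≤ ‖S‖ := by
    have hmem : (l2 : ℂ) ∈ spectrum ℂ S := by rw [hspec]; simp
    have := spectrum.norm_le_norm_of_mem hmem
    simpa [Complex.norm_real, abs_of_nonneg h2] using this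
  refine le_antisymm ?_ hlb
  rw [← hS.toReal_spectralRadius_complex_eq_norm]
  exact ENNReal.toReal_le_of_le_ofReal h2 hub

set_option maxHeartbeats 2000000

/-- Lemma 2.1: for B = [[x, b₁₂],[b₂₁, a]] with b₁₂ + b₂₁ = s and b₁₂b₂₁ = ax − p,
det(I − B*B) = 1 − |a|² − |x|² + |p|² − |s|²/2 − |s² − 4(ax−p)|/2; moreover if |p| < 1 then
‖B‖ < 1 ↔ det(I − B*B) > 0, and if |p| ≤ 1 then ‖B‖ ≤ 1 ↔ det(I − B*B) ≥ 0. -/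
theorem stmt0 (x a p s b12 b21 : ℂ)
    (hs : b12 + b21 = s) (hp : b12 * b21 = a * x - p)
    (B : Matrix (Fin 2) (Fin 2) ℂ) (hB : B = !![x, b12; b21, a]) :
    (1 - B.conjTranspose * B).det =
      ((1 - ‖a‖ ^ 2 - ‖x‖ ^ 2 + ‖p‖ ^ 2
        - ‖s‖ ^ 2 / 2 - ‖s ^ 2 - 4 * (a * x - p)‖ / 2 : ℝ) : ℂ) ∧
    (‖p‖ < 1 →
      (opNorm B < 1 ↔
        0 < 1 - ‖a‖ ^ 2 - ‖x‖ ^ 2 + ‖p‖ ^ 2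
          - ‖s‖ ^ 2 / 2 - ‖s ^ 2 - 4 * (a * x - p)‖ / 2)) ∧
    (‖p‖ ≤ 1 →
      (opNorm B ≤ 1 ↔
        0 ≤ 1 - ‖a‖ ^ 2 - ‖x‖ ^ 2 + ‖p‖ ^ 2
          - ‖s‖ ^ 2 / 2 - ‖s ^ 2 - 4 * (a * x - p)‖ / 2)) := by
  subst hB
  obtain ⟨m11, hm11⟩ : ∃ m11 : ℝ, m11 = ‖x‖ ^ 2 + ‖b21‖ ^ 2 := ⟨_, rfl⟩
  obtain ⟨m22, hm22⟩ : ∃ m22 : ℝ, m22 = ‖b12‖ ^ 2 + ‖a‖ ^ 2 := ⟨_, rfl⟩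
  obtain ⟨u, hu⟩ : ∃ u : ℂ, u = (starRingEnd ℂ) x * b12 + (starRingEnd ℂ) b21 * a := ⟨_, rfl⟩
  obtain ⟨D, hD⟩ : ∃ D : ℝ, D = ‖p‖ ^ 2 := ⟨_, rfl⟩
  obtain ⟨T, hT⟩ : ∃ T : ℝ, T = m11 + m22 := ⟨_, rfl⟩
  -- the entries of BᴴB
  have hM : (!![x, b12; b21, a]).conjTranspose * !![x, b12; b21, a]
      = !![(m11:ℂ), u; (starRingEnd ℂ) u, (m22:ℂ)] := by
    ext i j
    fin_cases i <;> fin_cases j <;>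
      simp [Matrix.mul_apply, Fin.sum_univ_two, Matrix.conjTranspose_apply,
        Complex.conj_mul', Complex.mul_conj, hm11, hm22, hu] <;> norm_cast <;> ring
  -- det B = p
  have hdetB : (!![x, b12; b21, a]).det = p := by
    rw [Matrix.det_fin_two_of]; linear_combination -hp
  -- det (BᴴB) = |p|²
  have hdetM : (m11 : ℂ) * m22 - u * (starRingEnd ℂ) u = (D : ℂ) := by
    have h1 : (!![(m11:ℂ), u; (starRingEnd ℂ) u, (m22:ℂ)]).det
        = (starRingEnd ℂ) p * p := by
      rw [← hM, Matrix.det_mul, Matrix.det_conjTranspose, hdetB]; rfl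
    rw [Matrix.det_fin_two_of] at h1
    rw [h1, Complex.conj_mul', hD]
    push_cast
    ring
  -- normSq u = m11 * m22 - D  (real version)
  have hnsq : Complex.normSq u = m11 * m22 - D := by
    have h2 : u * (starRingEnd ℂ) u = ((m11 * m22 - D : ℝ) : ℂ) := by
      push_cast; linear_combination -hdetM
    rw [Complex.mul_conj] at h2
    exact_mod_cast h2
  have hD0 : 0 ≤ D := by rw [hD]; positivity
  have hm110 : 0 ≤ m11 := by rw [hm11]; positivity
  have hm220 : 0 ≤ m22 := by rw [hm22]; positivity
  have hdisc : 0 ≤ T ^ 2 - 4 * D := by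
    have := Complex.normSq_nonneg u
    nlinarith [sq_nonneg (m11 - m22)]
  obtain ⟨q, hq⟩ : ∃ q : ℝ, q = Real.sqrt (T ^ 2 - 4 * D) := ⟨_, rfl⟩
  have hq0 : 0 ≤ q := hq ▸ Real.sqrt_nonneg _
  have hq2 : q ^ 2 = T ^ 2 - 4 * D := by rw [hq]; exact Real.sq_sqrt hdisc
  obtain ⟨l1, hl1⟩ : ∃ l1 : ℝ, l1 = (T - q) / 2 := ⟨_, rfl⟩
  obtain ⟨l2, hl2⟩ : ∃ l2 : ℝ, l2 = (T + q) / 2 := ⟨_, rfl⟩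
  have hsum : l1 + l2 = T := by rw [hl1, hl2]; ring
  have hprod : l1 * l2 = D := by rw [hl1, hl2]; nlinarith
  have hqT : q ≤ T := by
    nlinarith
  have hl10 : 0 ≤ l1 := by rw [hl1]; linarith
  have hl12 : l1 ≤ l2 := by rw [hl1, hl2]; linarith
  have hl20 : 0 ≤ l2 := hl10.trans hl12
  -- spectrum of BᴴB
  have hspecM : spectrum ℂ ((!![x, b12; b21, a]).conjTranspose * !![x, b12; b21, a])
      = {(l1 : ℂ), (l2 : ℂ)} := by
    ext z
    rw [spec_two, hM]
    have hent : (!![(m11:ℂ), u; (starRingEnd ℂ) u, (m22:ℂ)] : Matrix (Fin 2) (Fin 2) ℂ) 0 0 = (m11:ℂ) ∧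
        (!![(m11:ℂ), u; (starRingEnd ℂ) u, (m22:ℂ)] : Matrix (Fin 2) (Fin 2) ℂ) 1 1 = (m22:ℂ) ∧
        (!![(m11:ℂ), u; (starRingEnd ℂ) u, (m22:ℂ)] : Matrix (Fin 2) (Fin 2) ℂ) 0 1 = u ∧
        (!![(m11:ℂ), u; (starRingEnd ℂ) u, (m22:ℂ)] : Matrix (Fin 2) (Fin 2) ℂ) 1 0 = (starRingEnd ℂ) u := by
      refine ⟨rfl, rfl, rfl, rfl⟩
    rw [hent.1, hent.2.1, hent.2.2.1, hent.2.2.2]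
    have hfact : (z - (m11:ℂ)) * (z - (m22:ℂ)) - u * (starRingEnd ℂ) u
        = (z - (l1:ℂ)) * (z - (l2:ℂ)) := by
      have hsC : ((l1:ℂ)) + (l2:ℂ) = (m11:ℂ) + (m22:ℂ) := by
        have h' := hsum.trans hT
        exact_mod_cast congrArg Complex.ofReal h'
      have hpC : ((l1:ℂ)) * (l2:ℂ) = ((D:ℝ):ℂ) := by exact_mod_cast congrArg Complex.ofReal hprod
      linear_combination z * hsC - hpC + hdetM
    rw [hfact, mul_eq_zero, sub_eq_zero, sub_eq_zero]
    simp [Set.mem_insert_iff, Set.mem_singleton_iff]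
  -- norm of B squared equals l2
  have hopsq : opNorm (!![x, b12; b21, a]) ^ 2 = l2 := by
    have h0 : opNorm (!![x, b12; b21, a]) = ‖Matrix.toEuclideanCLM (𝕜 := ℂ) !![x, b12; b21, a]‖ := rfl
    have h1 : opNorm (!![x, b12; b21, a]) ^ 2
        = ‖Matrix.toEuclideanCLM (𝕜 := ℂ)
            ((!![x, b12; b21, a]).conjTranspose * !![x, b12; b21, a])‖ := by
      rw [h0, sq, ← CStarRing.norm_star_mul_self
        (x := Matrix.toEuclideanCLM (𝕜 := ℂ) !![x, b12; b21, a]), ← map_star, ← map_mul,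
        Matrix.star_eq_conjTranspose]
    rw [h1]
    refine norm_eq_of_spectrum _ ?_ l1 l2 hl10 hl12 ?_
    · rw [IsSelfAdjoint, ← map_star]
      congr 1
      rw [Matrix.star_eq_conjTranspose, Matrix.conjTranspose_mul, Matrix.conjTranspose_conjTranspose]
    · exact (AlgEquiv.spectrum_eq (Matrix.toEuclideanCLM (𝕜 := ℂ) (n := Fin 2)) _).trans hspecM
  have hop0 : 0 ≤ opNorm (!![x, b12; b21, a]) := by
    have h0 : opNorm (!![x, b12; b21, a]) = ‖Matrix.toEuclideanCLM (𝕜 := ℂ) !![x, b12; b21, a]‖ := rfl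
    rw [h0]; exact norm_nonneg _
  -- E = 1 - T + D
  have hE : 1 - ‖a‖ ^ 2 - ‖x‖ ^ 2 + ‖p‖ ^ 2
      - ‖s‖ ^ 2 / 2 - ‖s ^ 2 - 4 * (a * x - p)‖ / 2 = 1 - T + D := by
    have hr : ‖s‖ ^ 2 + ‖s ^ 2 - 4 * (a * x - p)‖ =
        2 * (‖b12‖ ^ 2 + ‖b21‖ ^ 2) := by
      rw [← hp, ← hs]
      have h2 : (b12 + b21) ^ 2 - 4 * (b12 * b21) = (b12 - b21) ^ 2 := by ring
      rw [h2, norm_pow]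
      simp only [Complex.sq_norm, Complex.normSq_apply, Complex.add_re, Complex.add_im,
        Complex.sub_re, Complex.sub_im]
      ring
    rw [hT, hm11, hm22, hD]
    linarith
  refine ⟨?_, ?_, ?_⟩
  · -- determinant formula
    have hdet : (1 - (!![x, b12; b21, a]).conjTranspose * !![x, b12; b21, a]).det
        = ((1 - T + D : ℝ) : ℂ) := by
      rw [hM]
      have : (1 - !![(m11:ℂ), u; (starRingEnd ℂ) u, (m22:ℂ)] : Matrix (Fin 2) (Fin 2) ℂ)
          = !![1 - (m11:ℂ), -u; -(starRingEnd ℂ) u, 1 - (m22:ℂ)] := by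
        ext i j; fin_cases i <;> fin_cases j <;> simp [Matrix.one_apply]
      rw [this, Matrix.det_fin_two_of]
      push_cast [hT]
      linear_combination hdetM
    rw [hdet, hE]
  · -- strict case
    intro hplt
    have hDlt : D < 1 := by rw [hD]; nlinarith [norm_nonneg p]
    rw [hE]
    rw [← pow_lt_one_iff_of_nonneg hop0 two_ne_zero, hopsq]
    constructor
    · intro h
      have hql : q < 2 - T := by rw [hl2] at h; linarith
      nlinarith
    · intro h
      have hT2 : T < 2 := by linarith
      have : q < 2 - T := by nlinarith
      rw [hl2]; linarith
  · -- non-strict case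
    intro hple
    have hDle : D ≤ 1 := by rw [hD]; nlinarith [norm_nonneg p]
    rw [hE]
    rw [← pow_le_one_iff_of_nonneg hop0 two_ne_zero, hopsq]
    constructor
    · intro h
      have hql : q ≤ 2 - T := by rw [hl2] at h; linarith
      nlinarith
    · intro h
      have hT2 : T ≤ 2 := by linarith
      have : q ≤ 2 - T := by nlinarith
      rw [hl2]; linarith
end

section
/- A point (x, a, p, s) ∈ ℂ⁴ belongs to 𝔽 if and only if (s, ax−p) ∈ 𝔾₂, |p| < 1, and 1 − |a|² − |x|² + |p|² − |s|²/2 − |s² − 4(ax−p)|/2 > 0. -/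
/-- The domain 𝔽 = {(a₁₁, a₂₂, det A, a₁₂ + a₂₁) : A ∈ M₂(ℂ), ‖A‖ < 1}. -/
noncomputable def domF : Set (ℂ × ℂ × ℂ × ℂ) :=
  {w | ∃ A : Matrix (Fin 2) (Fin 2) ℂ, opNorm A < 1 ∧
    w = (A 0 0, A 1 1, A.det, A 0 1 + A 1 0)}

/-- The symmetrized bidisc 𝔾₂. -/
def G2 : Set (ℂ × ℂ) :=
  {w | ∃ z1 z2 : ℂ, ‖z1‖ < 1 ∧ ‖z2‖ < 1 ∧ w = (z1 + z2, z1 * z2)}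

open Complex Matrix

noncomputable def mkv (z w : ℂ) : EuclideanSpace ℂ (Fin 2) :=
  (WithLp.equiv 2 (Fin 2 → ℂ)).symm ![z, w]

lemma mkv0 (z w : ℂ) : mkv z w 0 = z := rfl
lemma mkv1 (z w : ℂ) : mkv z w 1 = w := rfl

lemma mkv_ne (z w : ℂ) (h : ¬(z = 0 ∧ w = 0)) : mkv z w ≠ 0 := by
  intro h0
  apply h
  constructor
  · have := congrArg (fun f : EuclideanSpace ℂ (Fin 2) => f 0) h0; simpa [mkv0] using this
  · have := congrArg (fun f : EuclideanSpace ℂ (Fin 2) => f 1) h0; simpa [mkv1] using this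

lemma enorm_sq (v : EuclideanSpace ℂ (Fin 2)) :
    ‖v‖ ^ 2 = normSq (v 0) + normSq (v 1) := by
  rw [PiLp.norm_sq_eq_of_L2, Fin.sum_univ_two]
  simp [Complex.sq_norm]

lemma apply_comp (A : Matrix (Fin 2) (Fin 2) ℂ) (v : EuclideanSpace ℂ (Fin 2)) (i : Fin 2) :
    (Matrix.toEuclideanLin A v) i = A i 0 * v 0 + A i 1 * v 1 := by
  rw [Matrix.toEuclideanLin_apply]
  simp [Matrix.mulVec, dotProduct, Fin.sum_univ_two]

lemma normAv (A : Matrix (Fin 2) (Fin 2) ℂ) (v : EuclideanSpace ℂ (Fin 2)) :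
    ‖Matrix.toEuclideanLin A v‖ ^ 2 =
      normSq (A 0 0 * v 0 + A 0 1 * v 1) + normSq (A 1 0 * v 0 + A 1 1 * v 1) := by
  rw [enorm_sq, apply_comp, apply_comp]

lemma core_ident (a00 a01 a10 a11 v0 v1 : ℂ) :
    (1 - normSq a00 - normSq a10) *
      ((normSq v0 + normSq v1) -
        (normSq (a00 * v0 + a01 * v1) + normSq (a10 * v0 + a11 * v1)))
    = normSq (((1 - normSq a00 - normSq a10 : ℝ) : ℂ) * v0
          - ((starRingEnd ℂ) a00 * a01 + (starRingEnd ℂ) a10 * a11) * v1)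
      + (1 - (normSq a00 + normSq a01 + normSq a10 + normSq a11)
          + normSq (a00 * a11 - a01 * a10)) * normSq v1 := by
  simp only [normSq_apply, mul_re, mul_im, add_re, add_im, sub_re, sub_im,
    conj_re, conj_im, ofReal_re, ofReal_im]
  ring

lemma par_ident (z1 z2 : ℂ) :
    normSq (z1 + z2) + normSq (z1 - z2) = 2 * (normSq z1 + normSq z2) := by
  simp only [normSq_apply, add_re, add_im, sub_re, sub_im]; ring

lemma lagrange_ident (x z1 z2 a : ℂ) :
    1 - (normSq x + normSq z1 + normSq z2 + normSq a) + normSq (x * a - z1 * z2)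
    = (1 - normSq x - normSq z2) * (1 - normSq z1 - normSq a)
      - normSq ((starRingEnd ℂ) x * z1 + (starRingEnd ℂ) z2 * a) := by
  simp only [normSq_apply, mul_re, mul_im, add_re, add_im, sub_re, sub_im,
    conj_re, conj_im]
  ring

lemma mkv_norm_one : ‖mkv 1 0‖ = 1 := by
  have h : ‖mkv 1 0‖ ^ 2 = 1 := by rw [enorm_sq]; simp [mkv]
  nlinarith [norm_nonneg (mkv 1 0)]

lemma opNorm_lt_one_iff (A : Matrix (Fin 2) (Fin 2) ℂ) :
    opNorm A < 1 ↔
      ∀ v : EuclideanSpace ℂ (Fin 2), v ≠ 0 → ‖Matrix.toEuclideanLin A v‖ < ‖v‖ := by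
  set T := LinearMap.toContinuousLinearMap (Matrix.toEuclideanLin A) with hT
  have hTv : ∀ v, Matrix.toEuclideanLin A v = T v := fun v => rfl
  constructor
  · intro h v hv
    have h0 : 0 < ‖v‖ := norm_pos_iff.mpr hv
    calc ‖Matrix.toEuclideanLin A v‖ = ‖T v‖ := by rw [hTv]
      _ ≤ ‖T‖ * ‖v‖ := T.le_opNorm v
      _ < 1 * ‖v‖ := by exact mul_lt_mul_of_pos_right h h0
      _ = ‖v‖ := one_mul _
  · intro h
    have hsc : IsCompact (Metric.sphere (0 : EuclideanSpace ℂ (Fin 2)) 1) :=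
      isCompact_sphere 0 1
    have hne : (Metric.sphere (0 : EuclideanSpace ℂ (Fin 2)) 1).Nonempty := by
      exact ⟨mkv 1 0, by simp [mkv_norm_one]⟩
    obtain ⟨v₀, hv₀s, hmax⟩ := hsc.exists_isMaxOn hne
      ((T.continuous.norm).continuousOn)
    have hv₀ : ‖v₀‖ = 1 := by simpa using hv₀s
    have hv₀ne : v₀ ≠ 0 := by
      intro h0; rw [h0] at hv₀; simp at hv₀
    have hlt : ‖T v₀‖ < 1 := by
      have := h v₀ hv₀ne; rwa [hTv, hv₀] at this
    have hbound : ‖T‖ ≤ ‖T v₀‖ := by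
      apply ContinuousLinearMap.opNorm_le_bound _ (norm_nonneg _)
      intro v
      rcases eq_or_ne v 0 with rfl | hv
      · simp
      · have h0 : 0 < ‖v‖ := norm_pos_iff.mpr hv
        set u : EuclideanSpace ℂ (Fin 2) := ((‖v‖⁻¹ : ℝ) : ℂ) • v with hu
        have hun : ‖u‖ = 1 := by
          rw [hu, norm_smul]
          simp [_root_.abs_of_nonneg (le_of_lt (inv_pos.mpr h0)), inv_mul_cancel₀ (ne_of_gt h0)]
        have hmem : u ∈ Metric.sphere (0 : EuclideanSpace ℂ (Fin 2)) 1 := by simp [hun]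
        have := hmax hmem
        have hTu : ‖T u‖ = ‖v‖⁻¹ * ‖T v‖ := by
          rw [hu, _root_.map_smul, norm_smul]
          simp [_root_.abs_of_nonneg (le_of_lt (inv_pos.mpr h0))]
        simp only [Set.mem_setOf_eq] at this
        rw [hTu] at this
        calc ‖T v‖ = ‖v‖ * (‖v‖⁻¹ * ‖T v‖) := by field_simp
          _ ≤ ‖v‖ * ‖T v₀‖ := by nlinarith
          _ = ‖T v₀‖ * ‖v‖ := mul_comm _ _
    exact lt_of_le_of_lt hbound hlt

lemma quad_iff (A : Matrix (Fin 2) (Fin 2) ℂ) :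
    (∀ v : EuclideanSpace ℂ (Fin 2), v ≠ 0 → ‖Matrix.toEuclideanLin A v‖ < ‖v‖) ↔
      (0 < 1 - normSq (A 0 0) - normSq (A 1 0) ∧
       0 < 1 - normSq (A 0 1) - normSq (A 1 1) ∧
       0 < 1 - (normSq (A 0 0) + normSq (A 0 1) + normSq (A 1 0) + normSq (A 1 1))
           + normSq (A 0 0 * A 1 1 - A 0 1 * A 1 0)) := by
  constructor
  · intro h
    have key : ∀ z w : ℂ, ¬(z = 0 ∧ w = 0) →
        normSq (A 0 0 * z + A 0 1 * w) + normSq (A 1 0 * z + A 1 1 * w)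
          < normSq z + normSq w := by
      intro z w hzw
      have hlt := h (mkv z w) (mkv_ne z w hzw)
      have h2 : ‖Matrix.toEuclideanLin A (mkv z w)‖ ^ 2 < ‖mkv z w‖ ^ 2 :=
        pow_lt_pow_left₀ hlt (norm_nonneg _) two_ne_zero
      rw [normAv, enorm_sq] at h2
      simpa [mkv0, mkv1] using h2
    have hα : 0 < 1 - normSq (A 0 0) - normSq (A 1 0) := by
      have := key 1 0 (by simp)
      simp only [mul_one, mul_zero, add_zero, normSq_one, normSq_zero] at this
      linarith
    have hγ : 0 < 1 - normSq (A 0 1) - normSq (A 1 1) := by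
      have := key 0 1 (by simp)
      simp only [mul_one, mul_zero, zero_add, add_zero, normSq_one, normSq_zero] at this
      linarith
    refine ⟨hα, hγ, ?_⟩
    set α : ℝ := 1 - normSq (A 0 0) - normSq (A 1 0) with hαdef
    set c : ℂ := (starRingEnd ℂ) (A 0 0) * A 0 1 + (starRingEnd ℂ) (A 1 0) * A 1 1 with hcdef
    have hαne : (α : ℂ) ≠ 0 := by
      simp only [ne_eq, ofReal_eq_zero]; exact ne_of_gt hα
    have hQ := key c (α : ℂ) (by intro hh; exact hαne hh.2)
    have hid := core_ident (A 0 0) (A 0 1) (A 1 0) (A 1 1) c (α : ℂ)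
    rw [← hαdef, ← hcdef] at hid
    have hz : (α : ℂ) * c - c * (α : ℂ) = 0 := by ring
    rw [hz, normSq_zero] at hid
    have hα2 : normSq ((α : ℂ)) = α * α := normSq_ofReal α
    rw [hα2] at hid
    nlinarith [hα, hQ, hid]
  · rintro ⟨hα, hγ, hδ⟩ v hv
    have hvz : ¬(v 0 = 0 ∧ v 1 = 0) := by
      rintro ⟨h0, h1⟩
      apply hv
      ext i
      fin_cases i
      · exact h0
      · exact h1
    apply lt_of_pow_lt_pow_left₀ 2 (norm_nonneg v)
    rw [normAv, enorm_sq]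
    have hid := core_ident (A 0 0) (A 0 1) (A 1 0) (A 1 1) (v 0) (v 1)
    by_cases hw : v 1 = 0
    · have hz : v 0 ≠ 0 := fun h0 => hvz ⟨h0, hw⟩
      rw [hw] at hid ⊢
      simp only [mul_zero, sub_zero, add_zero, normSq_zero] at hid ⊢
      simp only [normSq_mul, normSq_ofReal] at hid ⊢
      nlinarith [normSq_pos.mpr hz, hα, hid]
    · nlinarith [normSq_nonneg (((1 - normSq (A 0 0) - normSq (A 1 0) : ℝ) : ℂ) * v 0
          - ((starRingEnd ℂ) (A 0 0) * A 0 1 + (starRingEnd ℂ) (A 1 0) * A 1 1) * v 1),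
        normSq_pos.mpr hw, hα, hδ, hid]

lemma opNorm_lt_one_iff' (A : Matrix (Fin 2) (Fin 2) ℂ) :
    opNorm A < 1 ↔
      (0 < 1 - normSq (A 0 0) - normSq (A 1 0) ∧
       0 < 1 - normSq (A 0 1) - normSq (A 1 1) ∧
       0 < 1 - (normSq (A 0 0) + normSq (A 0 1) + normSq (A 1 0) + normSq (A 1 1))
           + normSq (A 0 0 * A 1 1 - A 0 1 * A 1 0)) :=
  (opNorm_lt_one_iff A).trans (quad_iff A)

lemma abs_lt_one_of_normSq (z : ℂ) (h : normSq z < 1) : ‖z‖ < 1 := by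
  nlinarith [norm_nonneg z, Complex.sq_norm z]

/-- Proposition 2.2: (x, a, p, s) ∈ 𝔽 iff (s, ax−p) ∈ 𝔾₂, |p| < 1, and
1 − |a|² − |x|² + |p|² − |s|²/2 − |s² − 4(ax−p)|/2 > 0. -/
theorem stmt1 (x a p s : ℂ) :
    (x, a, p, s) ∈ domF ↔
      (s, a * x - p) ∈ G2 ∧ ‖p‖ < 1 ∧
      0 < 1 - ‖a‖ ^ 2 - ‖x‖ ^ 2 + ‖p‖ ^ 2
          - ‖s‖ ^ 2 / 2 - ‖s ^ 2 - 4 * (a * x - p)‖ / 2 := by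
  constructor
  · rintro ⟨A, hA, heq⟩
    simp only [Prod.mk.injEq] at heq
    obtain ⟨hx, ha, hp, hs⟩ := heq
    rw [Matrix.det_fin_two] at hp
    obtain ⟨hα, hγ, hδ⟩ := (opNorm_lt_one_iff' A).mp hA
    set z1 : ℂ := A 0 1 with hz1
    set z2 : ℂ := A 1 0 with hz2
    have hq : a * x - p = z1 * z2 := by rw [ha, hx, hp]; ring
    refine ⟨⟨z1, z2, ?_, ?_, ?_⟩, ?_, ?_⟩
    · exact abs_lt_one_of_normSq z1 (by nlinarith [normSq_nonneg (A 1 1)])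
    · exact abs_lt_one_of_normSq z2 (by nlinarith [normSq_nonneg (A 0 0)])
    · rw [Prod.mk.injEq]; exact ⟨hs, hq⟩
    · -- |p| < 1
      have htri : ‖p‖ ≤
          ‖A 0 0‖ * ‖A 1 1‖ + ‖z1‖ * ‖z2‖ := by
        rw [hp]
        calc ‖A 0 0 * A 1 1 - z1 * z2‖
            ≤ ‖A 0 0 * A 1 1‖ + ‖z1 * z2‖ := by
              exact norm_sub_le _ _
          _ = _ := by rw [norm_mul, norm_mul]
      have e1 := Complex.sq_norm (A 0 0)
      have e2 := Complex.sq_norm (A 1 1)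
      have e3 := Complex.sq_norm z1
      have e4 := Complex.sq_norm z2
      nlinarith [htri, hα, hγ, sq_nonneg (‖A 0 0‖ - ‖A 1 1‖),
        sq_nonneg (‖z1‖ - ‖z2‖), norm_nonneg p]
    · -- positivity condition
      have hs2 : s ^ 2 - 4 * (a * x - p) = (z1 - z2) ^ 2 := by rw [hs, hq]; ring
      have habs2 : ‖s ^ 2 - 4 * (a * x - p)‖ = normSq (z1 - z2) := by
        rw [hs2, norm_pow, Complex.sq_norm]
      have habs1 : ‖s‖ ^ 2 = normSq (z1 + z2) := by rw [hs, Complex.sq_norm]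
      have hpar := par_ident z1 z2
      have ea : ‖a‖ ^ 2 = normSq (A 1 1) := by rw [Complex.sq_norm, ha]
      have ex : ‖x‖ ^ 2 = normSq (A 0 0) := by rw [Complex.sq_norm, hx]
      rw [habs2, habs1]
      have ep' : ‖p‖ ^ 2 = normSq (A 0 0 * A 1 1 - z1 * z2) := by
        rw [Complex.sq_norm, hp]
      linarith [hδ, hpar, ea, ex, ep']
  · rintro ⟨⟨z1, z2, h1, h2, hsz⟩, hp, hpos⟩
    simp only [Prod.mk.injEq] at hsz
    obtain ⟨hs, hq⟩ := hsz
    refine ⟨Matrix.of ![![x, z1], ![z2, a]], ?_, ?_⟩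
    · rw [opNorm_lt_one_iff']
      have E00 : (Matrix.of ![![x, z1], ![z2, a]]) 0 0 = x := rfl
      have E01 : (Matrix.of ![![x, z1], ![z2, a]]) 0 1 = z1 := rfl
      have E10 : (Matrix.of ![![x, z1], ![z2, a]]) 1 0 = z2 := rfl
      have E11 : (Matrix.of ![![x, z1], ![z2, a]]) 1 1 = a := rfl
      rw [E00, E01, E10, E11]
      have hpval : p = x * a - z1 * z2 := by linear_combination -hq
      -- convert hpos to normSq form
      have hs2 : s ^ 2 - 4 * (a * x - p) = (z1 - z2) ^ 2 := by rw [hs, hq]; ring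
      have habs2 : ‖s ^ 2 - 4 * (a * x - p)‖ = normSq (z1 - z2) := by
        rw [hs2, norm_pow, Complex.sq_norm]
      have habs1 : ‖s‖ ^ 2 = normSq (z1 + z2) := by rw [hs, Complex.sq_norm]
      have hpar := par_ident z1 z2
      have ea := Complex.sq_norm a
      have ex := Complex.sq_norm x
      have ep : ‖p‖ ^ 2 = normSq (x * a - z1 * z2) := by
        rw [Complex.sq_norm, hpval]
      rw [habs2, habs1] at hpos
      have hδ : 0 < 1 - (normSq x + normSq z1 + normSq z2 + normSq a)
          + normSq (x * a - z1 * z2) := by linarith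
      refine ⟨?_, ?_, hδ⟩
      -- need α > 0 and γ > 0
      all_goals {
        have hnp : normSq (x * a - z1 * z2) < 1 := by
          nlinarith [norm_nonneg p, ep, hp]
        have hL := lagrange_ident x z1 z2 a
        have hc := normSq_nonneg ((starRingEnd ℂ) x * z1 + (starRingEnd ℂ) z2 * a)
        nlinarith [hδ, hL, hc, hnp]
      }
    · have hpval : p = x * a - z1 * z2 := by linear_combination -hq
      have hdet : (Matrix.of ![![x, z1], ![z2, a]]).det = x * a - z1 * z2 := by
        rw [Matrix.det_fin_two]; rfl
      simp only [Prod.mk.injEq]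
      exact ⟨rfl, rfl, by rw [hdet, hpval], by rw [hs]; rfl⟩
end

section
/- Let (x, a, p, s) ∈ ℂ⁴ and let λ₁, λ₂ ∈ ℂ with |λ₁| < 1, |λ₂| < 1 satisfy (s, ax−p) = (λ₁ + λ₂, λ₁λ₂). Then (x, a, p, s) ∈ 𝔽 if and only if (λ₁, λ₂, −p, a + x) ∈ 𝔽. -/
open scoped Matrix.Norms.L2Operator

lemma opNorm_eq_norm (A : Matrix (Fin 2) (Fin 2) ℂ) : opNorm A = ‖A‖ := rfl

/-- The swap (permutation) matrix. -/
def J : Matrix (Fin 2) (Fin 2) ℂ := !![0,1;1,0]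

lemma JJ : J * J = 1 := by
  ext i j
  fin_cases i <;> fin_cases j <;> simp [J, Matrix.mul_apply, Fin.sum_univ_two]

lemma Jstar : star J = J := by
  ext i j
  fin_cases i <;> fin_cases j <;> simp [J, Matrix.star_apply]

lemma normJ : ‖J‖ = 1 := by
  have h : ‖star J * J‖ = ‖J‖ * ‖J‖ := CStarRing.norm_star_mul_self
  rw [Jstar, JJ, norm_one] at h
  nlinarith [norm_nonneg J]

lemma norm_mul_J (A : Matrix (Fin 2) (Fin 2) ℂ) : ‖A * J‖ = ‖A‖ := by
  apply le_antisymm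
  · calc ‖A * J‖ ≤ ‖A‖ * ‖J‖ := norm_mul_le _ _
    _ = ‖A‖ := by rw [normJ, mul_one]
  · calc ‖A‖ = ‖A * J * J‖ := by rw [mul_assoc, JJ, mul_one]
    _ ≤ ‖A * J‖ * ‖J‖ := norm_mul_le _ _
    _ = ‖A * J‖ := by rw [normJ, mul_one]

lemma norm_J_mul (A : Matrix (Fin 2) (Fin 2) ℂ) : ‖J * A‖ = ‖A‖ := by
  apply le_antisymm
  · calc ‖J * A‖ ≤ ‖J‖ * ‖A‖ := norm_mul_le _ _
    _ = ‖A‖ := by rw [normJ, one_mul]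
  · calc ‖A‖ = ‖J * (J * A)‖ := by rw [← mul_assoc, JJ, one_mul]
    _ ≤ ‖J‖ * ‖J * A‖ := norm_mul_le _ _
    _ = ‖J * A‖ := by rw [normJ, one_mul]

lemma detJ : J.det = -1 := by simp [J, Matrix.det_fin_two]

/-- The key one-directional step: multiplying a realizing matrix by the swap matrix `J`
(on the left or on the right, depending on which root matches) preserves the norm and
permutes the entries appropriately. -/
lemma key (u v q t m1 m2 : ℂ) (hsum : t = m1 + m2) (hprod : u * v - q = m1 * m2)
    (h : (u, v, q, t) ∈ domF) : (m1, m2, -q, v + u) ∈ domF := by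
  obtain ⟨A, hA, hw⟩ := h
  simp only [Prod.mk.injEq] at hw
  obtain ⟨hu, hv, hq, ht⟩ := hw
  rw [opNorm_eq_norm] at hA
  have hb : A 0 1 + A 1 0 = m1 + m2 := by rw [← ht, ← hsum]
  have hbc : A 0 1 * A 1 0 = m1 * m2 := by
    have hdet : A.det = u * v - A 0 1 * A 1 0 := by
      rw [Matrix.det_fin_two, ← hu, ← hv]
    linear_combination hdet + hq + hprod
  have hroot : (A 0 1 - m1) * (A 0 1 - m2) = 0 := by
    linear_combination (A 0 1) * hb - hbc
  rcases mul_eq_zero.1 hroot with h0 | h0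
  · -- A 0 1 = m1, A 1 0 = m2 : use A * J
    refine ⟨A * J, ?_, ?_⟩
    · rwa [opNorm_eq_norm, norm_mul_J]
    · have e00 : (A * J) 0 0 = A 0 1 := by simp [J, Matrix.mul_apply, Fin.sum_univ_two]
      have e11 : (A * J) 1 1 = A 1 0 := by simp [J, Matrix.mul_apply, Fin.sum_univ_two]
      have e01 : (A * J) 0 1 = A 0 0 := by simp [J, Matrix.mul_apply, Fin.sum_univ_two]
      have e10 : (A * J) 1 0 = A 1 1 := by simp [J, Matrix.mul_apply, Fin.sum_univ_two]
      have ed : (A * J).det = -q := by rw [Matrix.det_mul, detJ, ← hq]; ring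
      simp only [Prod.mk.injEq, e00, e11, e01, e10, ed]
      refine ⟨by linear_combination -h0, by linear_combination h0 - hb, trivial, by
        rw [← hu, ← hv]; ring⟩
  · -- A 0 1 = m2, A 1 0 = m1 : use J * A
    refine ⟨J * A, ?_, ?_⟩
    · rwa [opNorm_eq_norm, norm_J_mul]
    · have e00 : (J * A) 0 0 = A 1 0 := by simp [J, Matrix.mul_apply, Fin.sum_univ_two]
      have e11 : (J * A) 1 1 = A 0 1 := by simp [J, Matrix.mul_apply, Fin.sum_univ_two]
      have e01 : (J * A) 0 1 = A 1 1 := by simp [J, Matrix.mul_apply, Fin.sum_univ_two]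
      have e10 : (J * A) 1 0 = A 0 0 := by simp [J, Matrix.mul_apply, Fin.sum_univ_two]
      have ed : (J * A).det = -q := by rw [Matrix.det_mul, detJ, ← hq]; ring
      simp only [Prod.mk.injEq, e00, e11, e01, e10, ed]
      refine ⟨by linear_combination h0 - hb, by linear_combination -h0, trivial, by
        rw [← hu, ← hv]⟩

/-- Corollary 2.3: if (s, ax−p) = (λ₁ + λ₂, λ₁λ₂) with λ₁, λ₂ ∈ 𝔻, then
(x, a, p, s) ∈ 𝔽 iff (λ₁, λ₂, −p, a + x) ∈ 𝔽. -/
theorem stmt2 (x a p s l1 l2 : ℂ)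
    (h1 : ‖l1‖ < 1) (h2 : ‖l2‖ < 1)
    (hs : s = l1 + l2) (hp : a * x - p = l1 * l2) :
    (x, a, p, s) ∈ domF ↔ (l1, l2, -p, a + x) ∈ domF := by
  constructor
  · intro h
    exact key x a p s l1 l2 hs (by linear_combination hp) h
  · intro h
    have := key l1 l2 (-p) (a + x) x a (by ring) (by linear_combination -hp) h
    simpa [hs, add_comm l2 l1] using this
end

section
/- If (x₁, x₂, x₃, x₄) lies in the closure of 𝔽 in ℂ⁴ and r ∈ (0, 1), then (rx₁, rx₂, r²x₃, rx₄) ∈ 𝔽. -/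
set_option synthInstance.maxHeartbeats 1000000
set_option maxHeartbeats 1000000


noncomputable def matToCLM : Matrix (Fin 2) (Fin 2) ℂ ≃ₗ[ℂ]
    (EuclideanSpace ℂ (Fin 2) →L[ℂ] EuclideanSpace ℂ (Fin 2)) :=
  Matrix.toEuclideanLin.trans LinearMap.toContinuousLinearMap

lemma opNorm_eq (A : Matrix (Fin 2) (Fin 2) ℂ) : opNorm A = ‖matToCLM A‖ := rfl

noncomputable def phiF : Matrix (Fin 2) (Fin 2) ℂ → ℂ × ℂ × ℂ × ℂ :=
  fun A => (A 0 0, A 1 1, A.det, A 0 1 + A 1 0)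

lemma phiF_cont : Continuous phiF := by
  have happ : ∀ i j, Continuous fun A : Matrix (Fin 2) (Fin 2) ℂ => A i j := fun i j =>
    (continuous_apply j).comp (continuous_apply i)
  exact (happ 0 0).prodMk ((happ 1 1).prodMk
    ((Continuous.matrix_det continuous_id).prodMk ((happ 0 1).add (happ 1 0))))

lemma closure_domF_sub :
    closure domF ⊆ phiF '' (matToCLM ⁻¹' Metric.closedBall 0 1) := by
  have hKeq : matToCLM ⁻¹' Metric.closedBall 0 1
      = matToCLM.symm '' Metric.closedBall 0 1 := by
    ext A
    simp only [Set.mem_preimage, Metric.mem_closedBall, dist_zero_right, Set.mem_image]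
    constructor
    · intro hA
      exact ⟨matToCLM A, hA, matToCLM.symm_apply_apply A⟩
    · rintro ⟨x, hx, rfl⟩
      simpa using hx
  have hcompact : IsCompact (matToCLM ⁻¹' Metric.closedBall 0 1) := by
    rw [hKeq]
    exact (isCompact_closedBall 0 1).image
      matToCLM.symm.toLinearMap.continuous_of_finiteDimensional
  have hclosed : IsClosed (phiF '' (matToCLM ⁻¹' Metric.closedBall 0 1)) :=
    (hcompact.image phiF_cont).isClosed
  refine closure_minimal ?_ hclosed
  rintro w ⟨A, hA, rfl⟩
  exact ⟨A, by simpa [Metric.mem_closedBall, dist_zero_right] using (opNorm_eq A ▸ hA).le, rfl⟩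

/-- Lemma 2.5: if (x₁, x₂, x₃, x₄) ∈ closure 𝔽 and r ∈ (0,1), then (rx₁, rx₂, r²x₃, rx₄) ∈ 𝔽. -/
theorem stmt4 (x1 x2 x3 x4 : ℂ) (h : (x1, x2, x3, x4) ∈ closure domF)
    (r : ℝ) (hr0 : 0 < r) (hr1 : r < 1) :
    ((r : ℂ) * x1, (r : ℂ) * x2, (r : ℂ) ^ 2 * x3, (r : ℂ) * x4) ∈ domF := by
  obtain ⟨A, hA, hphi⟩ := closure_domF_sub h
  have hA1 : ‖matToCLM A‖ ≤ 1 := by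
    simpa [Metric.mem_closedBall, dist_zero_right] using hA
  obtain ⟨h1, h2, h3, h4⟩ : A 0 0 = x1 ∧ A 1 1 = x2 ∧ A.det = x3 ∧ A 0 1 + A 1 0 = x4 := by
    have := hphi
    simp only [phiF, Prod.mk.injEq] at this
    tauto
  refine ⟨(r : ℂ) • A, ?_, ?_⟩
  · rw [opNorm_eq, map_smul, norm_smul ((r:ℂ)) (matToCLM A)]
    have : ‖(r : ℂ)‖ = r := by
      simp [Complex.norm_real, abs_of_pos hr0]
    rw [this]
    calc r * ‖matToCLM A‖ ≤ r * 1 := by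
          exact mul_le_mul_of_nonneg_left hA1 hr0.le
      _ < 1 := by linarith
  · have hdet : ((r : ℂ) • A).det = (r : ℂ) ^ 2 * A.det := by
      rw [Matrix.det_smul]
      norm_num
    simp [Matrix.smul_apply, hdet, h1, h2, h3, ← h4, smul_eq_mul, mul_add]
end

section
/- For (x₁, x₂, x₃) ∈ ℂ³, the point (x₁, x₂, x₃, 0) belongs to 𝔽 if and only if (0, x₁, x₂, x₃) ∈ ℍ, which in turn holds if and only if (x₁, x₂, x₃) ∈ 𝔼. -/
set_option maxHeartbeats 1000000

/-- The tetrablock 𝔼. -/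
def tetraE : Set (ℂ × ℂ × ℂ) :=
  {x | ∀ z1 z2 : ℂ, ‖z1‖ ≤ 1 → ‖z2‖ ≤ 1 →
    1 - x.1 * z1 - x.2.1 * z2 + x.2.2 * z1 * z2 ≠ 0}

/-- The hexablock ℍ. -/
noncomputable def hexaH : Set (ℂ × ℂ × ℂ × ℂ) :=
  {w | (w.2.1, w.2.2.1, w.2.2.2) ∈ tetraE ∧
    sSup {r : ℝ | ∃ z1 z2 : ℂ, ‖z1‖ < 1 ∧ ‖z2‖ < 1 ∧
      r = ‖(w.1 * (Real.sqrt ((1 - ‖z1‖ ^ 2) * (1 - ‖z2‖ ^ 2)) : ℂ) /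
        (1 - w.2.1 * z1 - w.2.2.1 * z2 + w.2.2.2 * z1 * z2))‖} < 1}

/-! ### Auxiliary lemmas -/

lemma mulVec_norm_le' (A : Matrix (Fin 2) (Fin 2) ℂ) (v : Fin 2 → ℂ) :
    ‖(WithLp.equiv 2 (Fin 2 → ℂ)).symm (A.mulVec v)‖ ≤
      opNorm A * ‖(WithLp.equiv 2 (Fin 2 → ℂ)).symm v‖ := by
  have := (LinearMap.toContinuousLinearMap (Matrix.toEuclideanLin A)).le_opNorm
    ((WithLp.equiv 2 (Fin 2 → ℂ)).symm v)
  simpa [Matrix.toEuclideanLin_apply_piLp_toLp, opNorm] using this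

lemma eucl_norm_sq' (v : Fin 2 → ℂ) :
    ‖(WithLp.equiv 2 (Fin 2 → ℂ)).symm v‖ ^ 2 =
      ‖(v 0)‖ ^ 2 + ‖(v 1)‖ ^ 2 := by
  rw [EuclideanSpace.norm_eq, Real.sq_sqrt (by positivity)]
  simp [Fin.sum_univ_two, PiLp.toLp_apply]

/-- Forward direction: if `‖A‖ < 1` then `(a₁₁, a₂₂, det A)` is in the tetrablock. -/
lemma norm_lt_mem_tetra (A : Matrix (Fin 2) (Fin 2) ℂ) (hA : opNorm A < 1) :
    (A 0 0, A 1 1, A.det) ∈ tetraE := by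
  intro z1 z2 hz1 hz2 hcon
  set D : Matrix (Fin 2) (Fin 2) ℂ := Matrix.diagonal ![z1, z2] with hD
  have hdet : (1 - A * D).det = 0 := by
    have h1 : (1 - A * D) 0 0 = 1 - A 0 0 * z1 := by
      simp [hD, Matrix.mul_apply, Fin.sum_univ_two, Matrix.diagonal, Matrix.one_apply]
    have h2 : (1 - A * D) 0 1 = - (A 0 1 * z2) := by
      simp [hD, Matrix.mul_apply, Fin.sum_univ_two, Matrix.diagonal, Matrix.one_apply]
    have h3 : (1 - A * D) 1 0 = - (A 1 0 * z1) := by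
      simp [hD, Matrix.mul_apply, Fin.sum_univ_two, Matrix.diagonal, Matrix.one_apply]
    have h4 : (1 - A * D) 1 1 = 1 - A 1 1 * z2 := by
      simp [hD, Matrix.mul_apply, Fin.sum_univ_two, Matrix.diagonal, Matrix.one_apply]
    rw [Matrix.det_fin_two, h1, h2, h3, h4]
    rw [Matrix.det_fin_two] at hcon
    linear_combination hcon
  rw [← Matrix.exists_mulVec_eq_zero_iff] at hdet
  obtain ⟨v, hv0, hv⟩ := hdet
  have hAv : A.mulVec (D.mulVec v) = v := by
    have h' : (1 - A * D).mulVec v = v - (A * D).mulVec v := by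
      rw [Matrix.sub_mulVec, Matrix.one_mulVec]
    rw [h'] at hv
    rw [Matrix.mulVec_mulVec]
    exact (sub_eq_zero.mp hv).symm
  have hDv : ‖(WithLp.equiv 2 (Fin 2 → ℂ)).symm (D.mulVec v)‖ ≤
      ‖(WithLp.equiv 2 (Fin 2 → ℂ)).symm v‖ := by
    rw [← pow_le_pow_iff_left₀ (norm_nonneg _) (norm_nonneg _) two_ne_zero]
    rw [eucl_norm_sq', eucl_norm_sq']
    have e0 : D.mulVec v 0 = z1 * v 0 := by simp [hD, Matrix.mulVec_diagonal]
    have e1 : D.mulVec v 1 = z2 * v 1 := by simp [hD, Matrix.mulVec_diagonal]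
    rw [e0, e1, norm_mul, norm_mul, mul_pow, mul_pow]
    have b1 : ‖z1‖ ^ 2 ≤ 1 := by nlinarith [norm_nonneg z1]
    have b2 : ‖z2‖ ^ 2 ≤ 1 := by nlinarith [norm_nonneg z2]
    nlinarith [sq_nonneg (‖(v 0)‖), sq_nonneg (‖(v 1)‖),
      mul_le_mul_of_nonneg_right b1 (sq_nonneg (‖(v 0)‖)),
      mul_le_mul_of_nonneg_right b2 (sq_nonneg (‖(v 1)‖))]
  have hvpos : 0 < ‖(WithLp.equiv 2 (Fin 2 → ℂ)).symm v‖ := by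
    rw [norm_pos_iff]
    intro h
    apply hv0
    ext i
    have := congrFun (congrArg (WithLp.equiv 2 (Fin 2 → ℂ)) h) i
    simpa using this
  have key := mulVec_norm_le' A (D.mulVec v)
  rw [hAv] at key
  have : opNorm A * ‖(WithLp.equiv 2 (Fin 2 → ℂ)).symm (D.mulVec v)‖ ≤
      opNorm A * ‖(WithLp.equiv 2 (Fin 2 → ℂ)).symm v‖ :=
    mul_le_mul_of_nonneg_left hDv (norm_nonneg _)
  nlinarith

lemma abs_lt_of_forall (α β : ℂ) (h : ∀ z : ℂ, ‖z‖ ≤ 1 → α - β * z ≠ 0) :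
    ‖β‖ < ‖α‖ := by
  by_cases hβ : β = 0
  · have hα : α ≠ 0 := by simpa using h 0 (by simp)
    simpa [hβ] using (norm_pos_iff.mpr hα)
  · by_contra hc
    push_neg at hc
    have hαβ : ‖(α / β)‖ ≤ 1 := by
      rw [norm_div, div_le_one (norm_pos_iff.mpr hβ)]
      exact hc
    exact h (α / β) hαβ (by field_simp; ring)

lemma mobius_abs_le (a ζ : ℂ) (ha : ‖a‖ < 1) (hζ : ‖ζ‖ ≤ 1) :
    ‖(a + ζ)‖ ≤ ‖(1 + (starRingEnd ℂ) a * ζ)‖ := by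
  have key : Complex.normSq (1 + (starRingEnd ℂ) a * ζ) - Complex.normSq (a + ζ)
      = (1 - Complex.normSq a) * (1 - Complex.normSq ζ) := by
    simp [Complex.normSq_apply, Complex.mul_re, Complex.mul_im, Complex.conj_re,
      Complex.conj_im, Complex.add_re, Complex.add_im]
    ring
  have h1 : Complex.normSq a ≤ 1 := by
    have := Complex.sq_norm a; nlinarith [norm_nonneg a]
  have h2 : Complex.normSq ζ ≤ 1 := by
    have := Complex.sq_norm ζ; nlinarith [norm_nonneg ζ]
  have h3 : Complex.normSq (a + ζ) ≤ Complex.normSq (1 + (starRingEnd ℂ) a * ζ) := by nlinarith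
  have := Real.sqrt_le_sqrt h3
  simpa [← Complex.norm_def, Complex.norm_def] using this

/-- From the family of strict inequalities, derive the Abouhajar–White–Young condition. -/
lemma awy_one (a b c : ℂ) (hb : ‖b‖ < 1)
    (hF : ∀ z : ℂ, ‖z‖ ≤ 1 → ‖(a - c * z)‖ < ‖(1 - b * z)‖) :
    ‖(a - (starRingEnd ℂ) b * c)‖ + ‖(a * b - c)‖
      < 1 - ‖b‖ ^ 2 := by
  set D : ℂ := a - (starRingEnd ℂ) b * c with hD
  set N : ℂ := a * b - c with hN
  obtain ⟨ζ, hζ1, hζal⟩ : ∃ ζ : ℂ, ‖ζ‖ ≤ 1 ∧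
      ‖(D + ζ * N)‖ = ‖D‖ + ‖N‖ := by
    by_cases hDN : D = 0
    · exact ⟨1, by simp, by simp [hDN]⟩
    by_cases hN0 : N = 0
    · exact ⟨1, by simp, by simp [hN0]⟩
    have hD0 : (‖D‖ : ℝ) ≠ 0 := ne_of_gt (norm_pos_iff.mpr hDN)
    have hN0' : (‖N‖ : ℝ) ≠ 0 := ne_of_gt (norm_pos_iff.mpr hN0)
    refine ⟨(D * (starRingEnd ℂ) N) / ((‖D‖ * ‖N‖ : ℝ) : ℂ), ?_, ?_⟩
    · rw [norm_div]
      simp only [norm_mul]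
      rw [Complex.norm_conj, Complex.norm_real, Real.norm_eq_abs, _root_.abs_of_nonneg (by positivity)]
      exact le_of_eq (div_self (by positivity))
    · have hNN : (starRingEnd ℂ) N * N = ((‖N‖ ^ 2 : ℝ) : ℂ) := by
        rw [mul_comm, Complex.mul_conj, Complex.sq_norm]
      have hζN : (D * (starRingEnd ℂ) N) / ((‖D‖ * ‖N‖ : ℝ) : ℂ) * N
          = ((‖N‖ / ‖D‖ : ℝ) : ℂ) * D := by
        have hDc : ((‖D‖ : ℝ) : ℂ) ≠ 0 := by exact_mod_cast hD0
        have hNc : ((‖N‖ : ℝ) : ℂ) ≠ 0 := by exact_mod_cast hN0'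
        calc (D * (starRingEnd ℂ) N) / ((‖D‖ * ‖N‖ : ℝ) : ℂ) * N
            = D * ((starRingEnd ℂ) N * N) / ((‖D‖ * ‖N‖ : ℝ) : ℂ) := by
              ring
        _ = D * ((‖N‖ ^ 2 : ℝ) : ℂ) / ((‖D‖ * ‖N‖ : ℝ) : ℂ) := by
              rw [hNN]
        _ = ((‖N‖ / ‖D‖ : ℝ) : ℂ) * D := by
              push_cast
              field_simp
      rw [hζN]
      have : D + ((‖N‖ / ‖D‖ : ℝ) : ℂ) * D
          = D * ((1 + ‖N‖ / ‖D‖ : ℝ) : ℂ) := by push_cast; ring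
      rw [this, norm_mul, Complex.norm_real, Real.norm_eq_abs, _root_.abs_of_nonneg (by positivity)]
      field_simp
  set z : ℂ := ((starRingEnd ℂ) b + ζ) / (1 + b * ζ) with hz
  have hden : ‖(b * ζ)‖ < 1 := by
    rw [norm_mul]
    calc ‖b‖ * ‖ζ‖ ≤ ‖b‖ * 1 :=
          mul_le_mul_of_nonneg_left hζ1 (norm_nonneg b)
    _ < 1 := by simpa using hb
  have hden0 : (1 : ℂ) + b * ζ ≠ 0 := by
    intro h
    have : ‖(b * ζ)‖ = 1 := by
      have : b * ζ = -1 := by linear_combination h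
      simp [this]
    linarith
  have habsden : 0 < ‖(1 + b * ζ)‖ := norm_pos_iff.mpr hden0
  have hzle : ‖z‖ ≤ 1 := by
    rw [hz, norm_div, div_le_one habsden]
    have := mobius_abs_le ((starRingEnd ℂ) b) ζ (by simpa using hb) hζ1
    simpa using this
  have hFz := hF z hzle
  have e1 : a - c * z = (D + ζ * N) / (1 + b * ζ) := by
    rw [hz, eq_div_iff hden0, hD, hN]
    have h' : c * ((starRingEnd ℂ) b + ζ) / (1 + b * ζ) * (1 + b * ζ)
        = c * ((starRingEnd ℂ) b + ζ) := div_mul_cancel₀ _ hden0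
    linear_combination (-1 : ℂ) * h'
  have e2 : (1 : ℂ) - b * z = ((1 - ‖b‖ ^ 2 : ℝ) : ℂ) / (1 + b * ζ) := by
    rw [hz, eq_div_iff hden0]
    have hbb : b * (starRingEnd ℂ) b = ((‖b‖ : ℝ) : ℂ) ^ 2 := by
      rw [Complex.mul_conj]
      norm_cast
      rw [Complex.sq_norm]
    push_cast
    field_simp
    linear_combination -hbb
  rw [e1, e2, norm_div, norm_div, div_lt_div_iff₀ habsden habsden] at hFz
  rw [hζal, Complex.norm_real, Real.norm_eq_abs,
    _root_.abs_of_nonneg (by nlinarith [norm_nonneg b])] at hFz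
  exact lt_of_mul_lt_mul_right hFz (le_of_lt habsden)

lemma gamma_id (x1 x2 x3 p : ℂ) (hp : p ^ 2 = x3 - x1 * x2) :
    (1 - (Complex.normSq x1 + Complex.normSq p)) * (1 - (Complex.normSq x2 + Complex.normSq p))
      - Complex.normSq (x1 * (starRingEnd ℂ) p - (starRingEnd ℂ) x2 * p)
    = 1 + Complex.normSq x3 - Complex.normSq x1 - Complex.normSq x2
        - 2 * Complex.normSq p := by
  have hA : Complex.normSq (p ^ 2) = Complex.normSq (x3 - x1 * x2) := by rw [hp]
  have hB : (x1 * x2 * (starRingEnd ℂ) (p ^ 2)).re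
      = (x1 * x2 * ((starRingEnd ℂ) x3 - (starRingEnd ℂ) x1 * (starRingEnd ℂ) x2)).re := by
    rw [hp, map_sub, map_mul]
  simp only [Complex.normSq_apply, Complex.mul_re, Complex.mul_im, Complex.conj_re,
    Complex.conj_im, Complex.sub_re, Complex.sub_im, pow_two] at hA hB ⊢
  linear_combination hA + 2 * hB

lemma vec_bound (x1 x2 p a b : ℂ) :
    Complex.normSq (x1 * a + p * b) + Complex.normSq (x2 * b - p * a)
      ≤ (Complex.normSq x1 + Complex.normSq p) * Complex.normSq a
        + (Complex.normSq x2 + Complex.normSq p) * Complex.normSq b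
        + 2 * ‖(x1 * (starRingEnd ℂ) p - (starRingEnd ℂ) x2 * p)‖
            * (‖a‖ * ‖b‖) := by
  have cross : Complex.normSq (x1 * a + p * b) + Complex.normSq (x2 * b - p * a)
      = (Complex.normSq x1 + Complex.normSq p) * Complex.normSq a
        + (Complex.normSq x2 + Complex.normSq p) * Complex.normSq b
        + 2 * ((a * (starRingEnd ℂ) b)
            * (x1 * (starRingEnd ℂ) p - (starRingEnd ℂ) x2 * p)).re := by
    simp only [Complex.normSq_apply, Complex.mul_re, Complex.mul_im, Complex.conj_re,
      Complex.conj_im, Complex.add_re, Complex.add_im, Complex.sub_re, Complex.sub_im]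
    ring
  rw [cross]
  have h1 := Complex.re_le_norm ((a * (starRingEnd ℂ) b)
    * (x1 * (starRingEnd ℂ) p - (starRingEnd ℂ) x2 * p))
  rw [norm_mul, norm_mul, Complex.norm_conj] at h1
  nlinarith [norm_nonneg (x1 * (starRingEnd ℂ) p - (starRingEnd ℂ) x2 * p)]

lemma eps_bound (α β γ : ℝ) (hα0 : 0 ≤ α) (hβ0 : 0 ≤ β) (h0γ : 0 ≤ γ)
    (hα : α < 1) (hβ : β < 1) (hγ : γ ^ 2 < (1 - α) * (1 - β)) :
    ∃ c : ℝ, 0 ≤ c ∧ c < 1 ∧ ∀ s t : ℝ, 0 ≤ s → 0 ≤ t →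
      α * s ^ 2 + β * t ^ 2 + 2 * γ * (s * t) ≤ c * (s ^ 2 + t ^ 2) := by
  rcases eq_or_lt_of_le h0γ with hγ0 | hγpos
  · refine ⟨max α β, le_max_of_le_left hα0, max_lt hα hβ, fun s t hs ht => ?_⟩
    have h1 : α * s ^ 2 ≤ max α β * s ^ 2 :=
      mul_le_mul_of_nonneg_right (le_max_left _ _) (sq_nonneg s)
    have h2 : β * t ^ 2 ≤ max α β * t ^ 2 :=
      mul_le_mul_of_nonneg_right (le_max_right _ _) (sq_nonneg t)
    rw [← hγ0]
    nlinarith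
  · have h1β : 0 < 1 - β := by linarith
    have h1α : 0 < 1 - α := by linarith
    set ε : ℝ := (γ / (1 - β) + (1 - α) / γ) / 2 with hε
    have hlt : γ / (1 - β) < (1 - α) / γ := by
      rw [div_lt_div_iff₀ h1β hγpos]
      nlinarith
    have hε1 : γ / (1 - β) < ε := by rw [hε]; linarith
    have hε2 : ε < (1 - α) / γ := by rw [hε]; linarith
    have hεpos : 0 < ε := lt_of_le_of_lt (by positivity) hε1
    have key1 : γ * ε < 1 - α := by
      rw [lt_div_iff₀ hγpos] at hε2
      nlinarith
    have key2 : γ / ε < 1 - β := by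
      rw [div_lt_iff₀ hεpos]
      rw [div_lt_iff₀ h1β] at hε1
      nlinarith
    refine ⟨max (α + γ * ε) (β + γ / ε), le_max_of_le_left (by positivity),
      max_lt (by linarith) (by linarith), fun s t hs ht => ?_⟩
    have hAM : 2 * γ * (s * t) ≤ γ * ε * s ^ 2 + γ / ε * t ^ 2 := by
      have h := mul_nonneg (le_of_lt (div_pos hγpos hεpos)) (sq_nonneg (ε * s - t))
      have hε0 : ε ≠ 0 := ne_of_gt hεpos
      have expand : γ / ε * (ε * s - t) ^ 2
          = γ * ε * s ^ 2 + γ / ε * t ^ 2 - 2 * γ * (s * t) := by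
        field_simp
        ring
      nlinarith
    have h1 : (α + γ * ε) * s ^ 2 ≤ max (α + γ * ε) (β + γ / ε) * s ^ 2 :=
      mul_le_mul_of_nonneg_right (le_max_left _ _) (sq_nonneg s)
    have h2 : (β + γ / ε) * t ^ 2 ≤ max (α + γ * ε) (β + γ / ε) * t ^ 2 :=
      mul_le_mul_of_nonneg_right (le_max_right _ _) (sq_nonneg t)
    nlinarith

/-- Reverse direction: any point of the tetrablock is realised by a `2 × 2` matrix of norm
less than one whose off-diagonal entries sum to zero. -/
lemma tetra_to_matrix (x1 x2 x3 : ℂ) (hx : (x1, x2, x3) ∈ tetraE) :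
    ∃ A : Matrix (Fin 2) (Fin 2) ℂ, opNorm A < 1 ∧
      A 0 0 = x1 ∧ A 1 1 = x2 ∧ A.det = x3 ∧ A 0 1 + A 1 0 = 0 := by
  have hx' : ∀ z1 z2 : ℂ, ‖z1‖ ≤ 1 → ‖z2‖ ≤ 1 →
      1 - x1 * z1 - x2 * z2 + x3 * z1 * z2 ≠ 0 := hx
  have hF1 : ∀ z : ℂ, ‖z‖ ≤ 1 →
      ‖(x1 - x3 * z)‖ < ‖(1 - x2 * z)‖ := by
    intro z hz
    apply abs_lt_of_forall
    intro z1 h1 heq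
    exact hx' z1 z h1 hz (by linear_combination heq)
  have hF2 : ∀ z : ℂ, ‖z‖ ≤ 1 →
      ‖(x2 - x3 * z)‖ < ‖(1 - x1 * z)‖ := by
    intro z hz
    apply abs_lt_of_forall
    intro z2 h2 heq
    exact hx' z z2 hz h2 (by linear_combination heq)
  have hu : ‖x1‖ < 1 := by simpa using hF1 0 (by simp)
  have hv : ‖x2‖ < 1 := by simpa using hF2 0 (by simp)
  have hA1 := awy_one x1 x2 x3 hv hF1
  have hA2 := awy_one x2 x1 x3 hu hF2
  set u : ℝ := ‖x1‖ with hu'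
  set v : ℝ := ‖x2‖ with hv'
  set w : ℝ := ‖x3‖ with hw'
  set q : ℝ := ‖(x1 * x2 - x3)‖ with hq'
  have hA2' : ‖(x2 - (starRingEnd ℂ) x1 * x3)‖ + q < 1 - u ^ 2 := by
    rw [hq', mul_comm x1 x2]; exact hA2
  have hu0 : 0 ≤ u := norm_nonneg _
  have hv0 : 0 ≤ v := norm_nonneg _
  have hw0 : 0 ≤ w := norm_nonneg _
  have hq0 : 0 ≤ q := norm_nonneg _
  have t1 : u - v * w ≤ ‖(x1 - (starRingEnd ℂ) x2 * x3)‖ := by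
    have := norm_sub_norm_le x1 ((starRingEnd ℂ) x2 * x3)
    simpa [norm_mul, Complex.norm_conj] using this
  have t2 : w - u * v ≤ q := by
    have h := norm_sub_norm_le x3 (x1 * x2)
    rw [norm_sub_rev] at h
    simpa [norm_mul] using h
  have t1' : v - u * w ≤ ‖(x2 - (starRingEnd ℂ) x1 * x3)‖ := by
    have := norm_sub_norm_le x2 ((starRingEnd ℂ) x1 * x3)
    simpa [norm_mul, Complex.norm_conj] using this
  have huw : u + w < 1 + v := by nlinarith
  have hvw : v + w < 1 + u := by nlinarith
  have hw1 : w < 1 := by linarith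
  have hsq1 : u ^ 2 + w ^ 2 < 1 + v ^ 2 := by
    rcases le_or_gt w v with h | h
    · nlinarith
    · nlinarith
  have hsq2 : v ^ 2 + w ^ 2 < 1 + u ^ 2 := by
    rcases le_or_gt w u with h | h
    · nlinarith
    · nlinarith
  have hId : ‖(x1 - (starRingEnd ℂ) x2 * x3)‖ ^ 2
      = q ^ 2 + (1 - v ^ 2) * (u ^ 2 - w ^ 2) := by
    rw [hq', hu', hv', hw', Complex.sq_norm, Complex.sq_norm, Complex.sq_norm, Complex.sq_norm,
      Complex.sq_norm]
    simp only [Complex.normSq_apply, Complex.mul_re, Complex.mul_im, Complex.conj_re,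
      Complex.conj_im, Complex.sub_re, Complex.sub_im]
    ring
  have hmain : u ^ 2 + v ^ 2 + 2 * q < 1 + w ^ 2 := by
    have hP : 0 < 1 - v ^ 2 := by nlinarith
    have hDD : 0 ≤ ‖(x1 - (starRingEnd ℂ) x2 * x3)‖ := norm_nonneg _
    have h1 : ‖(x1 - (starRingEnd ℂ) x2 * x3)‖ ^ 2 < ((1 - v ^ 2) - q) ^ 2 := by
      nlinarith
    rw [hId] at h1
    have h2 : (1 - v ^ 2) * (u ^ 2 - w ^ 2) < (1 - v ^ 2) * ((1 - v ^ 2) - 2 * q) := by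
      nlinarith
    have h3 := (mul_lt_mul_iff_right₀ hP).mp h2
    linarith
  have hα : u ^ 2 + q < 1 := by linarith
  have hβ : v ^ 2 + q < 1 := by linarith
  obtain ⟨p, hp⟩ : ∃ p : ℂ, p ^ 2 = x3 - x1 * x2 :=
    IsAlgClosed.exists_pow_nat_eq (x3 - x1 * x2) zero_lt_two
  have hnp : Complex.normSq p = q := by
    rw [← Complex.sq_norm, ← norm_pow, hp, hq', ← norm_neg, neg_sub]
  set γ : ℝ := ‖(x1 * (starRingEnd ℂ) p - (starRingEnd ℂ) x2 * p)‖ with hγ'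
  have hγsq : γ ^ 2 < (1 - (u ^ 2 + q)) * (1 - (v ^ 2 + q)) := by
    have hgid := gamma_id x1 x2 x3 p hp
    rw [hnp] at hgid
    rw [hγ', Complex.sq_norm]
    have e1 : Complex.normSq x1 = u ^ 2 := (Complex.sq_norm x1).symm
    have e2 : Complex.normSq x2 = v ^ 2 := (Complex.sq_norm x2).symm
    have e3 : Complex.normSq x3 = w ^ 2 := (Complex.sq_norm x3).symm
    rw [e1, e2, e3] at hgid
    nlinarith
  obtain ⟨c, hc0, hc1, hcb⟩ := eps_bound (u ^ 2 + q) (v ^ 2 + q) γ (by positivity)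
    (by positivity) (norm_nonneg _) hα hβ hγsq
  refine ⟨!![x1, p; -p, x2], ?_, by simp, by simp, ?_, by simp⟩
  swap
  · rw [Matrix.det_fin_two_of]
    linear_combination hp
  have hbound : opNorm !![x1, p; -p, x2] ≤ Real.sqrt c := by
    apply ContinuousLinearMap.opNorm_le_bound _ (Real.sqrt_nonneg c)
    intro x
    set vf : Fin 2 → ℂ := WithLp.equiv 2 (Fin 2 → ℂ) x with hvf
    have hx2 : x = (WithLp.equiv 2 (Fin 2 → ℂ)).symm vf := rfl
    have happ : (LinearMap.toContinuousLinearMap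
        (Matrix.toEuclideanLin !![x1, p; -p, x2])) x
        = (WithLp.equiv 2 (Fin 2 → ℂ)).symm ((!![x1, p; -p, x2]).mulVec vf) := by
      rw [hx2]
      simp only [LinearMap.coe_toContinuousLinearMap']
      exact Matrix.toEuclideanLin_apply_piLp_toLp _ vf
    rw [happ]
    have hmv0 : (!![x1, p; -p, x2]).mulVec vf 0 = x1 * vf 0 + p * vf 1 := by
      simp [Matrix.mulVec, dotProduct, Fin.sum_univ_two]
    have hmv1 : (!![x1, p; -p, x2]).mulVec vf 1 = x2 * vf 1 - p * vf 0 := by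
      simp [Matrix.mulVec, dotProduct, Fin.sum_univ_two]
      ring
    have hnsq : ‖(WithLp.equiv 2 (Fin 2 → ℂ)).symm ((!![x1, p; -p, x2]).mulVec vf)‖ ^ 2
        ≤ c * ‖x‖ ^ 2 := by
      rw [eucl_norm_sq', hmv0, hmv1]
      have hb1 := vec_bound x1 x2 p (vf 0) (vf 1)
      rw [hnp] at hb1
      have hb2 := hcb (‖(vf 0)‖) (‖(vf 1)‖)
        (norm_nonneg _) (norm_nonneg _)
      have e1 : Complex.normSq x1 = u ^ 2 := (Complex.sq_norm x1).symm
      have e2 : Complex.normSq x2 = v ^ 2 := (Complex.sq_norm x2).symm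
      have hxnorm : ‖x‖ ^ 2 = ‖(vf 0)‖ ^ 2 + ‖(vf 1)‖ ^ 2 := by
        rw [hx2]; exact eucl_norm_sq' vf
      rw [hxnorm]
      rw [Complex.sq_norm, Complex.sq_norm]
      calc Complex.normSq (x1 * vf 0 + p * vf 1) + Complex.normSq (x2 * vf 1 - p * vf 0)
          ≤ (Complex.normSq x1 + q) * Complex.normSq (vf 0)
            + (Complex.normSq x2 + q) * Complex.normSq (vf 1)
            + 2 * γ * (‖(vf 0)‖ * ‖(vf 1)‖) := hb1
        _ ≤ c * (‖(vf 0)‖ ^ 2 + ‖(vf 1)‖ ^ 2) := by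
            rw [e1, e2] at *
            rw [← Complex.sq_norm (vf 0), ← Complex.sq_norm (vf 1)] at *
            exact hb2
    calc ‖(WithLp.equiv 2 (Fin 2 → ℂ)).symm ((!![x1, p; -p, x2]).mulVec vf)‖
        = Real.sqrt (‖(WithLp.equiv 2 (Fin 2 → ℂ)).symm
            ((!![x1, p; -p, x2]).mulVec vf)‖ ^ 2) := by
          rw [Real.sqrt_sq (norm_nonneg _)]
      _ ≤ Real.sqrt (c * ‖x‖ ^ 2) := Real.sqrt_le_sqrt hnsq
      _ = Real.sqrt c * ‖x‖ := by
          rw [Real.sqrt_mul hc0, Real.sqrt_sq (norm_nonneg _)]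
  have hlt : Real.sqrt c < 1 := by
    rw [show (1 : ℝ) = Real.sqrt 1 by simp]
    exact Real.sqrt_lt_sqrt hc0 hc1
  exact lt_of_le_of_lt hbound hlt

/-- Proposition 2.7: (x₁, x₂, x₃, 0) ∈ 𝔽 iff (0, x₁, x₂, x₃) ∈ ℍ, which holds iff
(x₁, x₂, x₃) ∈ 𝔼. -/
theorem stmt6 (x1 x2 x3 : ℂ) :
    ((x1, x2, x3, (0 : ℂ)) ∈ domF ↔ ((0 : ℂ), x1, x2, x3) ∈ hexaH) ∧
    (((0 : ℂ), x1, x2, x3) ∈ hexaH ↔ (x1, x2, x3) ∈ tetraE) := by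
  have hH : ((0 : ℂ), x1, x2, x3) ∈ hexaH ↔ (x1, x2, x3) ∈ tetraE := by
    constructor
    · intro h
      exact h.1
    · intro h
      refine ⟨h, ?_⟩
      have hset : {r : ℝ | ∃ z1 z2 : ℂ, ‖z1‖ < 1 ∧ ‖z2‖ < 1 ∧
          r = ‖((((0 : ℂ), x1, x2, x3).1)
            * (Real.sqrt ((1 - ‖z1‖ ^ 2) * (1 - ‖z2‖ ^ 2)) : ℂ) /
            (1 - x1 * z1 - x2 * z2 + x3 * z1 * z2))‖} = {(0 : ℝ)} := by
        ext r
        simp only [Set.mem_setOf_eq, Set.mem_singleton_iff]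
        constructor
        · rintro ⟨z1, z2, h1, h2, rfl⟩
          simp
        · intro hr
          exact ⟨0, 0, by simp, by simp, by simp [hr]⟩
      show sSup _ < 1
      rw [hset, csSup_singleton]
      norm_num
  have hF : (x1, x2, x3, (0 : ℂ)) ∈ domF ↔ (x1, x2, x3) ∈ tetraE := by
    constructor
    · rintro ⟨A, hA, heq⟩
      obtain ⟨e1, e2, e3, e4⟩ : x1 = A 0 0 ∧ x2 = A 1 1 ∧ x3 = A.det ∧ (0 : ℂ) = A 0 1 + A 1 0 := by
        simpa [Prod.ext_iff] using heq
      rw [e1, e2, e3]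
      exact norm_lt_mem_tetra A hA
    · intro h
      obtain ⟨A, hA, e1, e2, e3, e4⟩ := tetra_to_matrix x1 x2 x3 h
      exact ⟨A, hA, by rw [e1, e2, e3, e4]⟩
  exact ⟨hF.trans hH.symm, hH⟩
end

section
/- A point (0, 0, p, s) ∈ ℂ⁴ belongs to 𝔽 if and only if (s, −p) ∈ 𝔾₂. -/
lemma comp_le (x : EuclideanSpace ℂ (Fin 2)) (i : Fin 2) : ‖x i‖ ≤ ‖x‖ := by
  rw [EuclideanSpace.norm_eq]
  have h : ‖x i‖ = Real.sqrt (‖x i‖ ^ 2) := by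
    rw [Real.sqrt_sq (norm_nonneg _)]
  rw [h]
  apply Real.sqrt_le_sqrt
  exact Finset.single_le_sum (f := fun j => ‖x j‖ ^ 2) (fun j _ => by positivity) (Finset.mem_univ i)

lemma abs_entry_le (A : Matrix (Fin 2) (Fin 2) ℂ) (i j : Fin 2) :
    ‖A i j‖ ≤ opNorm A := by
  set f := LinearMap.toContinuousLinearMap (Matrix.toEuclideanLin A) with hf
  have h1 : ‖f (EuclideanSpace.single j 1)‖ ≤ opNorm A := by
    have := f.le_opNorm (EuclideanSpace.single j 1)
    simpa [EuclideanSpace.norm_single, opNorm] using this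
  have hval : f (EuclideanSpace.single j 1) i = A i j := by
    simp [hf, Matrix.toEuclideanLin_apply, Matrix.mulVec, dotProduct]
  calc ‖A i j‖ = ‖f (EuclideanSpace.single j 1) i‖ := by rw [hval]
    _ ≤ ‖f (EuclideanSpace.single j 1)‖ := comp_le _ i
    _ ≤ opNorm A := h1

lemma opNorm_anti (z1 z2 : ℂ) :
    opNorm (Matrix.of ![![0, z1], ![z2, 0]]) ≤ max ‖z1‖ ‖z2‖ := by
  set c := max ‖z1‖ ‖z2‖ with hc
  have hc0 : 0 ≤ c := le_trans (norm_nonneg z1) (le_max_left _ _)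
  apply ContinuousLinearMap.opNorm_le_bound _ hc0
  intro x
  set A := Matrix.of ![![0, z1], ![z2, 0]]
  have h0 : (Matrix.toEuclideanLin A x) 0 = z1 * x 1 := by
    simp [A, Matrix.toEuclideanLin_apply, Matrix.mulVec, dotProduct, Fin.sum_univ_two]
  have h1 : (Matrix.toEuclideanLin A x) 1 = z2 * x 0 := by
    simp [A, Matrix.toEuclideanLin_apply, Matrix.mulVec, dotProduct, Fin.sum_univ_two]
  have key : ‖Matrix.toEuclideanLin A x‖ ≤ c * ‖x‖ := by
    rw [EuclideanSpace.norm_eq, EuclideanSpace.norm_eq, Fin.sum_univ_two, Fin.sum_univ_two,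
      h0, h1]
    have hcs : c * Real.sqrt (‖x 0‖ ^ 2 + ‖x 1‖ ^ 2)
        = Real.sqrt (c ^ 2 * (‖x 0‖ ^ 2 + ‖x 1‖ ^ 2)) := by
      rw [Real.sqrt_mul (by positivity), Real.sqrt_sq hc0]
    rw [hcs]
    apply Real.sqrt_le_sqrt
    have e1 : ‖z1 * x 1‖ = ‖z1‖ * ‖x 1‖ := by rw [norm_mul]
    have e2 : ‖z2 * x 0‖ = ‖z2‖ * ‖x 0‖ := by rw [norm_mul]
    rw [e1, e2]
    have l1 : ‖z1‖ ≤ c := le_max_left _ _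
    have l2 : ‖z2‖ ≤ c := le_max_right _ _
    have a1 : (0:ℝ) ≤ ‖z1‖ := norm_nonneg _
    have a2 : (0:ℝ) ≤ ‖z2‖ := norm_nonneg _
    nlinarith [mul_le_mul_of_nonneg_right (mul_le_mul l1 l1 a1 hc0) (sq_nonneg (‖x 1‖)),
      mul_le_mul_of_nonneg_right (mul_le_mul l2 l2 a2 hc0) (sq_nonneg (‖x 0‖))]
  simpa using key

/-- Proposition 2.8: (0, 0, p, s) ∈ 𝔽 iff (s, −p) ∈ 𝔾₂. -/
theorem stmt7 (p s : ℂ) :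
    ((0 : ℂ), (0 : ℂ), p, s) ∈ domF ↔ (s, -p) ∈ G2 := by
  constructor
  · rintro ⟨A, hA, hw⟩
    obtain ⟨h00, h11, hp, hs⟩ : (0:ℂ) = A 0 0 ∧ (0:ℂ) = A 1 1 ∧ p = A.det ∧ s = A 0 1 + A 1 0 := by
      simpa [Prod.ext_iff] using hw
    refine ⟨A 0 1, A 1 0, lt_of_le_of_lt (abs_entry_le A 0 1) hA,
      lt_of_le_of_lt (abs_entry_le A 1 0) hA, ?_⟩
    have hdet : A.det = A 0 0 * A 1 1 - A 0 1 * A 1 0 := Matrix.det_fin_two A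
    rw [hdet, ← h00, ← h11] at hp
    simp only [Prod.ext_iff]
    constructor
    · exact hs
    · rw [hp]; ring
  · rintro ⟨z1, z2, h1, h2, he⟩
    obtain ⟨hs, hp⟩ : s = z1 + z2 ∧ -p = z1 * z2 := by simpa [Prod.ext_iff] using he
    refine ⟨Matrix.of ![![0, z1], ![z2, 0]], ?_, ?_⟩
    · exact lt_of_le_of_lt (opNorm_anti z1 z2) (max_lt h1 h2)
    · simp only [Prod.ext_iff]
      refine ⟨by simp, by simp, ?_, by simp [hs]⟩
      rw [Matrix.det_fin_two]
      simp only [Matrix.of_apply]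
      have : p = -(z1 * z2) := by linear_combination -hp
      rw [this]; simp
end

section
/- For every r ∈ (0, 1), set a = 1 − r²/2, s = 0, p = r². Then (a, s, −p) ∈ ℙ and (s, −p) ∈ 𝔾₂, but (0, a, p, s) ∉ 𝔽. -/
/-- The pentablock ℙ = {(a₂₁, a₁₁ + a₂₂, det A) : A ∈ M₂(ℂ), ‖A‖ < 1}. -/
noncomputable def pentaP : Set (ℂ × ℂ × ℂ) :=
  {w | ∃ A : Matrix (Fin 2) (Fin 2) ℂ, opNorm A < 1 ∧
    w = (A 1 0, A 0 0 + A 1 1, A.det)}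

lemma opNorm_le' (A : Matrix (Fin 2) (Fin 2) ℂ) (c : ℝ) (hc : 0 ≤ c)
    (h : ∀ v : Fin 2 → ℂ,
      ‖A 0 0 * v 0 + A 0 1 * v 1‖ ^ 2 + ‖A 1 0 * v 0 + A 1 1 * v 1‖ ^ 2
        ≤ c ^ 2 * (‖v 0‖ ^ 2 + ‖v 1‖ ^ 2)) : opNorm A ≤ c := by
  apply ContinuousLinearMap.opNorm_le_bound _ hc
  intro v
  have hv : ‖v‖ = Real.sqrt (‖v 0‖ ^ 2 + ‖v 1‖ ^ 2) := by
    rw [EuclideanSpace.norm_eq]; congr 1; simp [Fin.sum_univ_two]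
  have hAv : ‖(LinearMap.toContinuousLinearMap (Matrix.toEuclideanLin A)) v‖
      = Real.sqrt (‖A 0 0 * v 0 + A 0 1 * v 1‖ ^ 2 + ‖A 1 0 * v 0 + A 1 1 * v 1‖ ^ 2) := by
    rw [LinearMap.coe_toContinuousLinearMap', Matrix.toEuclideanLin_apply, EuclideanSpace.norm_eq]
    congr 1
    simp [Fin.sum_univ_two, Matrix.mulVec, dotProduct]
  rw [hAv, hv, ← Real.sqrt_sq hc, ← Real.sqrt_mul (by positivity)]
  exact Real.sqrt_le_sqrt (h v)

lemma le_opNorm2 (A : Matrix (Fin 2) (Fin 2) ℂ) (v : Fin 2 → ℂ) :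
    Real.sqrt (‖A 0 0 * v 0 + A 0 1 * v 1‖ ^ 2 + ‖A 1 0 * v 0 + A 1 1 * v 1‖ ^ 2)
      ≤ opNorm A * Real.sqrt (‖v 0‖ ^ 2 + ‖v 1‖ ^ 2) := by
  have h := (LinearMap.toContinuousLinearMap (Matrix.toEuclideanLin A)).le_opNorm
    ((WithLp.equiv 2 (Fin 2 → ℂ)).symm v)
  have hv : ‖(WithLp.equiv 2 (Fin 2 → ℂ)).symm v‖ = Real.sqrt (‖v 0‖ ^ 2 + ‖v 1‖ ^ 2) := by
    rw [EuclideanSpace.norm_eq]; congr 1; simp [Fin.sum_univ_two]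
  have hAv : ‖(LinearMap.toContinuousLinearMap (Matrix.toEuclideanLin A))
      ((WithLp.equiv 2 (Fin 2 → ℂ)).symm v)‖
      = Real.sqrt (‖A 0 0 * v 0 + A 0 1 * v 1‖ ^ 2 + ‖A 1 0 * v 0 + A 1 1 * v 1‖ ^ 2) := by
    rw [LinearMap.coe_toContinuousLinearMap', Matrix.toEuclideanLin_apply, EuclideanSpace.norm_eq]
    congr 1
    simp [Fin.sum_univ_two, Matrix.mulVec, dotProduct]
  rw [hAv, hv] at h
  exact h

lemma quadPSD (p q m e g : ℝ) (hp : 0 < p) (hpq : m ^ 2 ≤ p * q) :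
    2 * m * e * g ≤ p * e ^ 2 + q * g ^ 2 := by
  nlinarith [sq_nonneg (p * e - m * g), mul_nonneg (sub_nonneg.2 hpq) (sq_nonneg g)]

lemma normsq_c (z : ℂ) : ‖z‖ ^ 2 = z.re ^ 2 + z.im ^ 2 := by
  rw [Complex.sq_norm, Complex.normSq_apply]; ring

set_option maxHeartbeats 1000000 in
/-- Example 2.9: for r ∈ (0,1), with a = 1 − r²/2, s = 0, p = r², one has (a, s, −p) ∈ ℙ and
(s, −p) ∈ 𝔾₂, but (0, a, p, s) ∉ 𝔽. -/
theorem stmt9 (r : ℝ) (hr0 : 0 < r) (hr1 : r < 1)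
    (a s p : ℂ) (ha : a = 1 - (r : ℂ) ^ 2 / 2) (hs : s = 0) (hp : p = (r : ℂ) ^ 2) :
    (a, s, -p) ∈ pentaP ∧ (s, -p) ∈ G2 ∧ ((0 : ℂ), a, p, s) ∉ domF := by
  have hr20 : 0 < r ^ 2 := by positivity
  have hr2 : r ^ 2 < 1 := by nlinarith
  refine ⟨?_, ?_, ?_⟩
  · -- pentablock membership
    have hu0 : 0 < r ^ 2 - r ^ 4 / 4 := by nlinarith
    obtain ⟨x, hx0, hx2⟩ : ∃ x : ℝ, 0 ≤ x ∧ x ^ 2 = r ^ 2 * (r ^ 2 - r ^ 4 / 4) :=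
      ⟨Real.sqrt _, Real.sqrt_nonneg _, Real.sq_sqrt (by positivity)⟩
    have hε0 : 0 < (r ^ 2 - r ^ 4 / 4) * (1 - r ^ 2) ^ 2 / 2 := by
      have := mul_pos hu0 (pow_pos (show (0:ℝ) < 1 - r ^ 2 by linarith) 2); linarith
    have hε1 : (r ^ 2 - r ^ 4 / 4) * (1 - r ^ 2) ^ 2 / 2 < 1 := by
      nlinarith [sq_nonneg (1 - r ^ 2)]
    have hP0 : 0 < 1 - (r ^ 2 - r ^ 4 / 4) * (1 - r ^ 2) ^ 2 / 2 - x ^ 2 - (1 - r ^ 2 / 2) ^ 2 := by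
      rw [hx2]
      nlinarith [mul_pos (mul_pos hu0 (show (0:ℝ) < 1 - r ^ 2 by linarith))
        (show (0:ℝ) < 1 + r ^ 2 by nlinarith)]
    have hPQ : (x * ((1 - r ^ 2 / 2) * r ^ 2 - (1 - r ^ 2 / 2))) ^ 2 ≤
        (1 - (r ^ 2 - r ^ 4 / 4) * (1 - r ^ 2) ^ 2 / 2 - x ^ 2 - (1 - r ^ 2 / 2) ^ 2) *
        (1 - (r ^ 2 - r ^ 4 / 4) * (1 - r ^ 2) ^ 2 / 2 - x ^ 2 - ((1 - r ^ 2 / 2) * r ^ 2) ^ 2) := by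
      have hm : (x * ((1 - r ^ 2 / 2) * r ^ 2 - (1 - r ^ 2 / 2))) ^ 2
          = (r ^ 2 * (r ^ 2 - r ^ 4 / 4)) * ((1 - r ^ 2 / 2) ^ 2 * (1 - r ^ 2) ^ 2) := by
        have h : (x * ((1 - r ^ 2 / 2) * r ^ 2 - (1 - r ^ 2 / 2))) ^ 2
            = x ^ 2 * ((1 - r ^ 2 / 2) * r ^ 2 - (1 - r ^ 2 / 2)) ^ 2 := by ring
        rw [h, hx2]; ring
      rw [hm]
      have hPeq : 1 - (r ^ 2 - r ^ 4 / 4) * (1 - r ^ 2) ^ 2 / 2 - x ^ 2 - (1 - r ^ 2 / 2) ^ 2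
          = (r ^ 2 - r ^ 4 / 4) * (1 - r ^ 2) * (1 + r ^ 2) / 2 := by rw [hx2]; ring
      have hQeq : 1 - (r ^ 2 - r ^ 4 / 4) * (1 - r ^ 2) ^ 2 / 2 - x ^ 2
            - ((1 - r ^ 2 / 2) * r ^ 2) ^ 2
          = (1 - r ^ 2) * (1 + r ^ 2) * (2 - (r ^ 2 - r ^ 4 / 4)) / 2 := by rw [hx2]; ring
      rw [hPeq, hQeq]
      have aux : r ^ 2 * (1 - (r ^ 2 - r ^ 4 / 4))
          ≤ (1 + r ^ 2) ^ 2 * (2 - (r ^ 2 - r ^ 4 / 4)) / 4 := by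
        nlinarith [sq_nonneg (1 - r ^ 2)]
      have hnn : (0:ℝ) ≤ (r ^ 2 - r ^ 4 / 4) * (1 - r ^ 2) ^ 2 := by
        nlinarith [sq_nonneg (1 - r ^ 2)]
      nlinarith [mul_le_mul_of_nonneg_left aux hnn]
    refine ⟨!![(x : ℂ), (((1 - r ^ 2 / 2) * r ^ 2 : ℝ) : ℂ);
               (((1 - r ^ 2 / 2 : ℝ)) : ℂ), -(x : ℂ)], ?_, ?_⟩
    · -- opNorm < 1
      have h1ε : (0:ℝ) ≤ 1 - (r ^ 2 - r ^ 4 / 4) * (1 - r ^ 2) ^ 2 / 2 := by linarith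
      have hclt : Real.sqrt (1 - (r ^ 2 - r ^ 4 / 4) * (1 - r ^ 2) ^ 2 / 2) < 1 :=
        (Real.sqrt_lt' one_pos).2 (by nlinarith)
      refine lt_of_le_of_lt (opNorm_le' _ _ (Real.sqrt_nonneg _) fun v => ?_) hclt
      show ‖(x : ℂ) * v 0 + (((1 - r ^ 2 / 2) * r ^ 2 : ℝ) : ℂ) * v 1‖ ^ 2
          + ‖((1 - r ^ 2 / 2 : ℝ) : ℂ) * v 0 + -(x : ℂ) * v 1‖ ^ 2
          ≤ Real.sqrt (1 - (r ^ 2 - r ^ 4 / 4) * (1 - r ^ 2) ^ 2 / 2) ^ 2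
            * (‖v 0‖ ^ 2 + ‖v 1‖ ^ 2)
      rw [Real.sq_sqrt h1ε]
      have key : ∀ e g : ℝ, (x * e + (1 - r ^ 2 / 2) * r ^ 2 * g) ^ 2
          + ((1 - r ^ 2 / 2) * e - x * g) ^ 2
          ≤ (1 - (r ^ 2 - r ^ 4 / 4) * (1 - r ^ 2) ^ 2 / 2) * (e ^ 2 + g ^ 2) := by
        intro e g
        nlinarith [quadPSD (1 - (r ^ 2 - r ^ 4 / 4) * (1 - r ^ 2) ^ 2 / 2 - x ^ 2
            - (1 - r ^ 2 / 2) ^ 2)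
          (1 - (r ^ 2 - r ^ 4 / 4) * (1 - r ^ 2) ^ 2 / 2 - x ^ 2 - ((1 - r ^ 2 / 2) * r ^ 2) ^ 2)
          (x * ((1 - r ^ 2 / 2) * r ^ 2 - (1 - r ^ 2 / 2))) e g hP0 hPQ]
      rw [normsq_c, normsq_c, normsq_c, normsq_c]
      simp only [Complex.add_re, Complex.add_im, Complex.mul_re, Complex.mul_im,
        Complex.neg_re, Complex.neg_im, Complex.ofReal_re, Complex.ofReal_im]
      ring_nf
      nlinarith [key (v 0).re (v 1).re, key (v 0).im (v 1).im]
    · -- the triple equality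
      rw [Matrix.det_fin_two, Prod.mk.injEq, Prod.mk.injEq]
      have hxC : ((x : ℂ)) ^ 2 = (r:ℂ) ^ 2 * ((r:ℂ) ^ 2 - (r:ℂ) ^ 4 / 4) := by
        exact_mod_cast congrArg (fun t : ℝ => (t : ℂ)) hx2
      refine ⟨?_, ?_, ?_⟩
      · show a = ((1 - r ^ 2 / 2 : ℝ) : ℂ)
        rw [ha]; push_cast; ring
      · show s = (x : ℂ) + -(x : ℂ)
        rw [hs]; ring
      · show -p = (x : ℂ) * -(x : ℂ)
            - (((1 - r ^ 2 / 2) * r ^ 2 : ℝ) : ℂ) * ((1 - r ^ 2 / 2 : ℝ) : ℂ)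
        rw [hp]; push_cast
        linear_combination hxC
  · -- G2 membership
    refine ⟨(r : ℂ), -(r : ℂ), ?_, ?_, ?_⟩
    · simp [Complex.norm_real, abs_of_pos hr0, hr1]
    · simp [Complex.norm_real, abs_of_pos hr0, hr1]
    · rw [hs, hp, Prod.mk.injEq]
      constructor
      · ring
      · push_cast; ring
  · -- not in domF
    rintro ⟨A, hn, heq⟩
    rw [Prod.mk.injEq, Prod.mk.injEq, Prod.mk.injEq] at heq
    obtain ⟨h00, h11, hdet, hsum⟩ := heq
    have h10 : A 1 0 = -(A 0 1) := by
      have := hsum.symm; rw [hs] at this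
      linear_combination hs - hsum
    have hdet2 : A 0 1 ^ 2 = p := by
      rw [Matrix.det_fin_two] at hdet
      rw [← h00, h10] at hdet
      linear_combination -hdet
    have h := le_opNorm2 A ![0, 1]
    simp only [Matrix.cons_val_zero, Matrix.cons_val_one, Matrix.head_cons, mul_zero, mul_one,
      zero_add, norm_zero, norm_one, one_pow] at h
    have hs1 : Real.sqrt ((0:ℝ) ^ 2 + 1) = 1 := by norm_num
    rw [hs1, mul_one] at h
    have h01n : ‖A 0 1‖ ^ 2 = r ^ 2 := by
      have : ‖A 0 1‖ ^ 2 = ‖A 0 1 ^ 2‖ := by rw [norm_pow]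
      rw [this, hdet2, hp]
      rw [show ((r:ℂ))^2 = ((r^2 : ℝ) : ℂ) by push_cast; ring, Complex.norm_real]
      exact abs_of_pos hr20
    have h11n : ‖A 1 1‖ = 1 - r ^ 2 / 2 := by
      rw [← h11, ha, show (1:ℂ) - (r:ℂ)^2/2 = ((1 - r^2/2 : ℝ) : ℂ) by push_cast; ring,
        Complex.norm_real]
      exact abs_of_pos (by linarith)
    rw [h01n, h11n] at h
    have hgt : (1:ℝ) < Real.sqrt (r ^ 2 + (1 - r ^ 2 / 2) ^ 2) :=
      (Real.lt_sqrt (by norm_num)).2 (by nlinarith)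
    have := hn
    unfold opNorm at *
    linarith
end

section
/- If (0, x₁, x₂, x₃) ∈ ℍ_N, then (x₁, x₂, x₃, 0) ∈ 𝔽. -/
/-- The normed hexablock ℍ_N = {(a₂₁, a₁₁, a₂₂, det A) : A ∈ M₂(ℂ), ‖A‖ < 1}. -/
noncomputable def HN : Set (ℂ × ℂ × ℂ × ℂ) :=
  {w | ∃ A : Matrix (Fin 2) (Fin 2) ℂ, opNorm A < 1 ∧
    w = (A 1 0, A 0 0, A 1 1, A.det)}

/-- Each diagonal entry is bounded by the operator norm. -/
lemma diag_entry_le (A : Matrix (Fin 2) (Fin 2) ℂ) (i : Fin 2) : ‖A i i‖ ≤ opNorm A := by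
  set T := LinearMap.toContinuousLinearMap (Matrix.toEuclideanLin A)
  have h1 : ‖(inner ℂ (EuclideanSpace.single i (1:ℂ)) (T (EuclideanSpace.single i (1:ℂ))) : ℂ)‖
      ≤ ‖EuclideanSpace.single i (1:ℂ)‖ * ‖T (EuclideanSpace.single i (1:ℂ))‖ :=
    norm_inner_le_norm _ _
  have h2 : (inner ℂ (EuclideanSpace.single i (1:ℂ)) (T (EuclideanSpace.single i (1:ℂ))) : ℂ)
      = A i i := by
    rw [EuclideanSpace.inner_single_left]
    simp [T, Matrix.toEuclideanLin_apply, Matrix.mulVec_single]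
  have h3 : ‖T (EuclideanSpace.single i (1:ℂ))‖ ≤ ‖T‖ * ‖EuclideanSpace.single i (1:ℂ)‖ :=
    T.le_opNorm _
  rw [h2, EuclideanSpace.norm_single] at h1
  rw [EuclideanSpace.norm_single] at h3
  simp only [norm_one, one_mul, mul_one] at h1 h3
  exact h1.trans h3

/-- The operator norm of a diagonal matrix is bounded by a bound on its entries. -/
lemma diag_opNorm_le (d : Fin 2 → ℂ) (c : ℝ) (hc : 0 ≤ c) (hd : ∀ i, ‖d i‖ ≤ c) :
    opNorm (Matrix.diagonal d) ≤ c := by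
  apply ContinuousLinearMap.opNorm_le_bound _ hc
  intro v
  have happ : ∀ i, (LinearMap.toContinuousLinearMap
      (Matrix.toEuclideanLin (Matrix.diagonal d)) v) i = d i * v i := by
    intro i
    simp [Matrix.toEuclideanLin_apply, Matrix.mulVec_diagonal]
    fin_cases i <;> simp
  rw [EuclideanSpace.norm_eq, EuclideanSpace.norm_eq]
  have : ∑ i, ‖(LinearMap.toContinuousLinearMap
        (Matrix.toEuclideanLin (Matrix.diagonal d)) v) i‖^2
      ≤ ∑ i, c^2 * ‖v i‖^2 := by
    apply Finset.sum_le_sum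
    intro i _
    rw [happ i, norm_mul, mul_pow]
    gcongr
    exact hd i
  calc Real.sqrt (∑ i, ‖(LinearMap.toContinuousLinearMap
        (Matrix.toEuclideanLin (Matrix.diagonal d)) v) i‖^2)
      ≤ Real.sqrt (∑ i, c^2 * ‖v i‖^2) := Real.sqrt_le_sqrt this
    _ = c * Real.sqrt (∑ i, ‖v i‖^2) := by
        rw [← Finset.mul_sum, Real.sqrt_mul (sq_nonneg c), Real.sqrt_sq hc]

/-- Proposition 2.12(1): if (0, x₁, x₂, x₃) ∈ ℍ_N, then (x₁, x₂, x₃, 0) ∈ 𝔽. -/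
theorem stmt11 (x1 x2 x3 : ℂ) (h : ((0 : ℂ), x1, x2, x3) ∈ HN) :
    (x1, x2, x3, (0 : ℂ)) ∈ domF := by
  obtain ⟨A, hA, hw⟩ := h
  obtain ⟨h0, h1, h2, h3⟩ : (0:ℂ) = A 1 0 ∧ x1 = A 0 0 ∧ x2 = A 1 1 ∧ x3 = A.det := by
    simpa [Prod.ext_iff] using hw
  have hdet : x3 = x1 * x2 := by
    rw [h3, Matrix.det_fin_two, ← h0, ← h1, ← h2]; ring
  refine ⟨Matrix.diagonal ![x1, x2], ?_, ?_⟩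
  · have hx1 : ‖x1‖ < 1 := h1 ▸ lt_of_le_of_lt (diag_entry_le A 0) hA
    have hx2 : ‖x2‖ < 1 := h2 ▸ lt_of_le_of_lt (diag_entry_le A 1) hA
    calc opNorm (Matrix.diagonal ![x1, x2]) ≤ max ‖x1‖ ‖x2‖ := by
          apply diag_opNorm_le _ _ (le_max_of_le_left (norm_nonneg _))
          intro i
          fin_cases i
          · exact le_max_left _ _
          · exact le_max_right _ _
      _ < 1 := max_lt hx1 hx2
  · simp [Matrix.det_fin_two, Matrix.diagonal, hdet]
end

section
/- For (x, a, p, s) ∈ ℂ⁴ the following are equivalent: (i) there exist real numbers θ, x₁, x₂, x₃, x₄ with x₁² + x₂² + x₃² + x₄² = 1 such that (x, a, p, s) = (e^{iθ}(x₃ + ix₄), −e^{iθ}(x₃ − ix₄), −e^{2iθ}, 2e^{iθ}x₂); (ii) there exist z, w ∈ ℂ with |z|² + |w|² ≤ 1 and η ∈ ℂ with |η| = 1 such that (x, a, p, s) = (z̄, −ηz, −η, w + w̄η); (iii) (x, a, p) ∈ b𝔼 and there exists w ∈ ℂ with |x|² + |w|² ≤ 1 and s = w − w̄p. -/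
/-- The distinguished boundary of the tetrablock: b𝔼 = {x : x₁ = x̄₂x₃, |x₃| = 1, |x₂| ≤ 1}. -/
def bE : Set (ℂ × ℂ × ℂ) :=
  {x | x.1 = (starRingEnd ℂ) x.2.1 * x.2.2 ∧ ‖x.2.2‖ = 1 ∧ ‖x.2.1‖ ≤ 1}

private lemma unit_mul_conj {η : ℂ} (h : ‖η‖ = 1) :
    η * (starRingEnd ℂ) η = 1 := by
  rw [Complex.mul_conj]
  norm_cast
  rw [Complex.normSq_eq_norm_sq, h]; norm_num

/-- Theorem 3.3 (characterizations of the Shilov boundary of 𝔽): the conditions (i), (ii), (iii)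
on (x, a, p, s) ∈ ℂ⁴ are equivalent. -/
theorem stmt14 (x a p s : ℂ) :
    ((∃ θ x1 x2 x3 x4 : ℝ, x1 ^ 2 + x2 ^ 2 + x3 ^ 2 + x4 ^ 2 = 1 ∧
        x = Complex.exp (θ * Complex.I) * ((x3 : ℂ) + (x4 : ℂ) * Complex.I) ∧
        a = -(Complex.exp (θ * Complex.I) * ((x3 : ℂ) - (x4 : ℂ) * Complex.I)) ∧
        p = -Complex.exp (2 * (θ : ℂ) * Complex.I) ∧
        s = 2 * Complex.exp (θ * Complex.I) * (x2 : ℂ)) ↔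
      (∃ z w η : ℂ, ‖z‖ ^ 2 + ‖w‖ ^ 2 ≤ 1 ∧ ‖η‖ = 1 ∧
        x = (starRingEnd ℂ) z ∧ a = -(η * z) ∧ p = -η ∧ s = w + (starRingEnd ℂ) w * η)) ∧
    ((∃ z w η : ℂ, ‖z‖ ^ 2 + ‖w‖ ^ 2 ≤ 1 ∧ ‖η‖ = 1 ∧
        x = (starRingEnd ℂ) z ∧ a = -(η * z) ∧ p = -η ∧ s = w + (starRingEnd ℂ) w * η) ↔
      ((x, a, p) ∈ bE ∧ ∃ w : ℂ, ‖x‖ ^ 2 + ‖w‖ ^ 2 ≤ 1 ∧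
        s = w - (starRingEnd ℂ) w * p)) := by
  constructor
  · constructor
    · rintro ⟨θ, x1, x2, x3, x4, hsum, hx, ha, hp, hs⟩
      set e := Complex.exp (θ * Complex.I) with he
      have habs_e : ‖e‖ = 1 := Complex.norm_exp_ofReal_mul_I θ
      have hue : e * (starRingEnd ℂ) e = 1 := unit_mul_conj habs_e
      have hexp2 : e ^ 2 = Complex.exp (2 * (θ : ℂ) * Complex.I) := by
        rw [he, ← Complex.exp_nat_mul]; congr 1; push_cast; ring
      have hcx : (starRingEnd ℂ) x = (starRingEnd ℂ) e * ((x3 : ℂ) - (x4 : ℂ) * Complex.I) := by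
        rw [hx, map_mul, map_add, map_mul, Complex.conj_ofReal, Complex.conj_ofReal,
          Complex.conj_I]; ring
      have hcw : (starRingEnd ℂ) (e * (x2 : ℂ)) = (starRingEnd ℂ) e * (x2 : ℂ) := by
        rw [map_mul, Complex.conj_ofReal]
      refine ⟨(starRingEnd ℂ) x, e * (x2 : ℂ), e ^ 2, ?_, ?_, ?_, ?_, ?_, ?_⟩
      · have habs_x : ‖x‖ ^ 2 = x3 ^ 2 + x4 ^ 2 := by
          rw [hx, norm_mul, habs_e, one_mul, Complex.sq_norm, Complex.normSq_add_mul_I]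
        have habs_w : ‖e * (x2 : ℂ)‖ = |x2| := by
          rw [norm_mul, habs_e, one_mul, Complex.norm_real, Real.norm_eq_abs]
        rw [Complex.norm_conj, habs_x, habs_w]
        nlinarith [sq_nonneg x1, sq_abs x2]
      · rw [norm_pow, habs_e, one_pow]
      · rw [Complex.conj_conj]
      · rw [ha, hcx]; linear_combination (e * ((x3 : ℂ) - (x4 : ℂ) * Complex.I)) * hue
      · rw [hp, hexp2]
      · rw [hs, hcw]; linear_combination (-(e * (x2 : ℂ))) * hue
    · rintro ⟨z, w, η, hle, hη, hx, ha, hp, hs⟩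
      have hηe : Complex.exp (η.arg * Complex.I) = η := by
        conv_rhs => rw [← Complex.norm_mul_exp_arg_mul_I η]
        rw [hη]; simp
      obtain ⟨θ, hθη⟩ : ∃ θ : ℝ, Complex.exp (2 * (θ : ℂ) * Complex.I) = η :=
        ⟨η.arg / 2, by
          have h : (2 : ℂ) * (((η.arg / 2 : ℝ)) : ℂ) * Complex.I = (η.arg : ℂ) * Complex.I := by
            push_cast; ring
          rw [h, hηe]⟩
      set e := Complex.exp ((θ : ℂ) * Complex.I) with he
      have habs_e : ‖e‖ = 1 := Complex.norm_exp_ofReal_mul_I θ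
      have hue : e * (starRingEnd ℂ) e = 1 := unit_mul_conj habs_e
      have he2 : e ^ 2 = η := by
        rw [he, ← Complex.exp_nat_mul, ← hθη]; congr 1; push_cast; ring
      set u := (starRingEnd ℂ) e * x with hu
      set v := (starRingEnd ℂ) e * w with hv
      have hu_conj : (starRingEnd ℂ) u = e * z := by
        rw [hu, map_mul, Complex.conj_conj, hx, Complex.conj_conj]
      have hcv : (starRingEnd ℂ) v = e * (starRingEnd ℂ) w := by
        rw [hv, map_mul, Complex.conj_conj]
      have hx_eu : x = e * u := by rw [hu]; linear_combination (-x) * hue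
      have habs_u : ‖u‖ = ‖z‖ := by
        rw [hu, hx, norm_mul, Complex.norm_conj, Complex.norm_conj, habs_e, one_mul]
      have habs_v : ‖v‖ = ‖w‖ := by
        rw [hv, norm_mul, Complex.norm_conj, habs_e, one_mul]
      have h1 : u.re ^ 2 + u.im ^ 2 = ‖z‖ ^ 2 := by
        rw [← habs_u, Complex.sq_norm, Complex.normSq_apply]; ring
      have h2 : v.re ^ 2 ≤ ‖w‖ ^ 2 := by
        rw [← habs_v, Complex.sq_norm, Complex.normSq_apply]
        nlinarith [sq_nonneg v.im]
      have hA : v.re ^ 2 + u.re ^ 2 + u.im ^ 2 ≤ 1 := by nlinarith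
      have hre_sub : ((u.re : ℂ) - (u.im : ℂ) * Complex.I) = (starRingEnd ℂ) u := by
        apply Complex.ext <;> simp
      refine ⟨θ, Real.sqrt (1 - (v.re ^ 2 + u.re ^ 2 + u.im ^ 2)), v.re, u.re, u.im,
        ?_, ?_, ?_, ?_, ?_⟩
      · rw [Real.sq_sqrt (by linarith)]; ring
      · rw [Complex.re_add_im]; exact hx_eu
      · rw [hre_sub, hu_conj]; linear_combination ha + z * he2
      · rw [hp, ← hθη]
      · have h2v : v + (starRingEnd ℂ) v = 2 * (v.re : ℂ) := by
          rw [Complex.add_conj]; push_cast; ring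
        rw [hs]
        linear_combination e * h2v - e * hv - e * hcv - w * hue - (starRingEnd ℂ) w * he2
  · constructor
    · rintro ⟨z, w, η, hle, hη, hx, ha, hp, hs⟩
      have huη : η * (starRingEnd ℂ) η = 1 := unit_mul_conj hη
      have hz1 : ‖z‖ ≤ 1 := by
        nlinarith [norm_nonneg z, norm_nonneg w, sq_nonneg ‖w‖]
      refine ⟨⟨?_, ?_, ?_⟩, w, ?_, ?_⟩
      · show x = (starRingEnd ℂ) a * p
        rw [hx, ha, hp, map_neg, map_mul]
        linear_combination (-(starRingEnd ℂ) z) * huη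
      · show ‖p‖ = 1
        rw [hp, norm_neg, hη]
      · show ‖a‖ ≤ 1
        rw [ha, norm_neg, norm_mul, hη, one_mul]; exact hz1
      · rw [hx, Complex.norm_conj]; exact hle
      · rw [hs, hp]; ring
    · rintro ⟨hmem, w, hle, hs⟩
      simp only [bE, Set.mem_setOf_eq] at hmem
      obtain ⟨h1, h2, h3⟩ := hmem
      have hup : p * (starRingEnd ℂ) p = 1 := unit_mul_conj h2
      have hcx : (starRingEnd ℂ) x = a * (starRingEnd ℂ) p := by
        rw [h1, map_mul, Complex.conj_conj]
      refine ⟨(starRingEnd ℂ) x, w, -p, ?_, ?_, ?_, ?_, ?_, ?_⟩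
      · rw [Complex.norm_conj]; exact hle
      · rw [norm_neg]; exact h2
      · rw [Complex.conj_conj]
      · rw [hcx]; linear_combination (-a) * hup
      · rw [neg_neg]
      · rw [hs]; ring
end

section
/- Let (x, a, p, s) = (i, 1, i, 1−i) ∈ ℂ⁴. Then (x, a, p) ∈ b𝔼 and (s, −p) ∈ bΓ, but there exists no w ∈ ℂ with |x|² + |w|² ≤ 1 and s = w − w̄p. -/
/-- The distinguished boundary of Γ: bΓ = {(z₁+z₂, z₁z₂) : |z₁| = |z₂| = 1}. -/
def bGammaSet : Set (ℂ × ℂ) :=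
  {w | ∃ z1 z2 : ℂ, ‖z1‖ = 1 ∧ ‖z2‖ = 1 ∧ w = (z1 + z2, z1 * z2)}

/-- The example after Corollary 3.4: for (x, a, p, s) = (i, 1, i, 1−i), one has (x, a, p) ∈ b𝔼
and (s, −p) ∈ bΓ, but there is no w ∈ ℂ with |x|² + |w|² ≤ 1 and s = w − w̄p. -/
theorem stmt15 (x a p s : ℂ)
    (hx : x = Complex.I) (ha : a = 1) (hp : p = Complex.I) (hs : s = 1 - Complex.I) :
    (x, a, p) ∈ bE ∧ (s, -p) ∈ bGammaSet ∧
    ¬ ∃ w : ℂ, ‖x‖ ^ 2 + ‖w‖ ^ 2 ≤ 1 ∧ s = w - (starRingEnd ℂ) w * p := by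
  subst hx ha hp hs
  refine ⟨⟨by simp, by simp, by simp⟩, ⟨1, -Complex.I, by simp, by simp, by norm_num [sub_eq_add_neg]⟩, ?_⟩
  rintro ⟨w, hle, heq⟩
  have hx1 : ‖Complex.I‖ ^ 2 = 1 := by simp
  have hw : ‖w‖ ^ 2 ≤ 0 := by linarith [hle, hx1.le]
  have hw0 : w = 0 := by
    have := sq_nonneg (‖w‖)
    have : ‖w‖ = 0 := by nlinarith
    simpa using this
  rw [hw0] at heq
  simp [Complex.ext_iff] at heq
end
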